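/- arXiv:1012.3878 — 10 statements merged into one kernel-verified Lean document; each statement's English description precedes it below -/
import Mathlib

section
/- Given an n-party non-signalling system P(x|u) and a subnormalized distribution p·P^{z0}(x|u) where p ∈ [0,1] and P^{z0} is an n-party non-signalling system, there exists another n-party non-signalling system P^{z1} with p·P^{z0} + (1−p)·P^{z1} = P if and only if p·P^{z0}(x,u) ≤ P(x,u) for all x and u. -/
open scoped Classical

/-- An n-party system is non-signalling: for every subset `I` of parties, the marginal
over the outputs in `I` is independent of the inputs in `I`. -/
def IsNS {n : ℕ} {X U : Fin n → Type*} [∀ i, Fintype (X i)]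
    (P : (∀ i, X i) → (∀ i, U i) → ℝ) : Prop :=
  ∀ (I : Finset (Fin n)) (u u' : ∀ i, U i), (∀ i, i ∉ I → u i = u' i) →
    ∀ x : ∀ i, X i,
      (∑ x' : ∀ i, X i, if (∀ i, i ∉ I → x' i = x i) then P x' u else 0)
      = ∑ x' : ∀ i, X i, if (∀ i, i ∉ I → x' i = x i) then P x' u' else 0

/-- An n-party system is a conditional probability distribution. -/
def IsDist {n : ℕ} {X U : Fin n → Type*} [∀ i, Fintype (X i)]
    (P : (∀ i, X i) → (∀ i, U i) → ℝ) : Prop :=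
  (∀ x u, 0 ≤ P x u) ∧ ∀ u, ∑ x, P x u = 1

/-- `(p, P0)` extends to a non-signalling partition of `P` (i.e. there is a
non-signalling system `P1` with `p·P0 + (1−p)·P1 = P`) iff `p·P0 ≤ P` pointwise. -/
theorem stmt_2 {n : ℕ} {X U : Fin n → Type*} [∀ i, Fintype (X i)]
    (P P0 : (∀ i, X i) → (∀ i, U i) → ℝ)
    (hP : IsDist P) (hPns : IsNS P) (hP0 : IsDist P0) (hP0ns : IsNS P0)
    (p : ℝ) (hp0 : 0 ≤ p) (hp1 : p ≤ 1) :
    (∃ P1 : (∀ i, X i) → (∀ i, U i) → ℝ, IsDist P1 ∧ IsNS P1 ∧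
      ∀ x u, p * P0 x u + (1 - p) * P1 x u = P x u)
    ↔ ∀ x u, p * P0 x u ≤ P x u := by
  constructor
  · rintro ⟨P1, hP1, _, heq⟩ x u
    have := heq x u
    nlinarith [hP1.1 x u]
  · intro hle
    rcases eq_or_lt_of_le hp1 with hp | hp
    · -- p = 1 : then P0 = P, take P1 = P
      subst hp
      refine ⟨P, hP, hPns, fun x u => ?_⟩
      have hsum : ∀ u, ∑ x, P0 x u = ∑ x, P x u := fun u => by
        rw [hP0.2 u, hP.2 u]
      have hxeq : P0 x u = P x u := by
        have h := (Finset.sum_eq_sum_iff_of_le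
          (s := Finset.univ) (f := fun x => P0 x u) (g := fun x => P x u)
          (fun i _ => by simpa using hle i u)).mp (hsum u)
        simpa using h x (Finset.mem_univ x)
      rw [hxeq]; ring
    · have h1p : (0:ℝ) < 1 - p := by linarith
      refine ⟨fun x u => (P x u - p * P0 x u) / (1 - p), ⟨?_, ?_⟩, ?_, ?_⟩
      · intro x u
        exact div_nonneg (by linarith [hle x u]) h1p.le
      · intro u
        rw [← Finset.sum_div]
        rw [Finset.sum_sub_distrib, ← Finset.mul_sum, hP.2 u, hP0.2 u]
        field_simp
      · intro I u u' hu x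
        have key : ∀ v : ∀ i, U i,
            (∑ x' : ∀ i, X i, if (∀ i, i ∉ I → x' i = x i) then
              (P x' v - p * P0 x' v) / (1 - p) else 0)
            = ((∑ x' : ∀ i, X i, if (∀ i, i ∉ I → x' i = x i) then P x' v else 0)
              - p * ∑ x' : ∀ i, X i, if (∀ i, i ∉ I → x' i = x i) then P0 x' v else 0)
              / (1 - p) := by
          intro v
          have h : ∀ x' : ∀ i, X i,
              (if (∀ i, i ∉ I → x' i = x i) then (P x' v - p * P0 x' v) / (1 - p) else 0)
              = ((if (∀ i, i ∉ I → x' i = x i) then P x' v else 0)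
                 - p * (if (∀ i, i ∉ I → x' i = x i) then P0 x' v else 0)) / (1 - p) := by
            intro x'; split <;> simp
          simp only [h]
          rw [← Finset.sum_div, Finset.sum_sub_distrib, ← Finset.mul_sum]
        rw [key u, key u', hPns I u u' hu x, hP0ns I u u' hu x]
      · intro x u
        field_simp
        ring
end

section
/- Let P(X,Y|U,V) be a bipartite non-signalling system with binary inputs and outputs satisfying (1/4)·∑_{(x,y,u,v): x⊕y = u·v} P(x,y|u,v) = 1−ε. Then for any tripartite non-signalling extension P(X,Y,Z|U,V,W) and any inputs u,v and any adversarial input w, the average over z of |P(X=0 | u,v,w,z) − 1/2| is at most 2ε. -/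
lemma aux_key (p : Bool → Bool → Bool → Bool → ℝ)
    (hp : ∀ x y u v, 0 ≤ p x y u v)
    (hU : ∀ y v, p false y false v + p true y false v = p false y true v + p true y true v)
    (hV : ∀ x u, p x false u false + p x true u false = p x false u true + p x true u true)
    (u v : Bool) :
    |(∑ y, p false y u v) - (∑ x, ∑ y, p x y u v)/2| ≤
      (1/2) * ∑ u' : Bool, ∑ v' : Bool, ∑ x : Bool, ∑ y : Bool,
        (if xor x y = (u' && v') then (0:ℝ) else p x y u' v') := by
  simp only [Fintype.sum_bool]
  norm_num
  cases u <;> cases v <;>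
    (rw [abs_le]; constructor <;>
      linarith [hp false false false false, hp false true false false, hp true false false false,
        hp true true false false, hp false false false true, hp false true false true,
        hp true false false true, hp true true false true, hp false false true false,
        hp false true true false, hp true false true false, hp true true true false,
        hp false false true true, hp false true true true, hp true false true true,
        hp true true true true, hU false false, hU false true, hU true false, hU true true,
        hV false false, hV false true, hV true false, hV true true])

/-- If the Alice–Bob marginal of a tripartite non-signalling system has CHSH value
`1 − ε`, then for any inputs `u, v` and any adversarial input `w`, the average over
`z` of `|P(X=0|u,v,w,z) − 1/2|` is at most `2ε`. -/
theorem stmt_3 {Z W : Type*} [Fintype Z]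
    (ε : ℝ)
    (P : Bool → Bool → Bool → Bool → ℝ)
    (P3 : Bool → Bool → Z → Bool → Bool → W → ℝ)
    (hpos : ∀ x y z u v w, 0 ≤ P3 x y z u v w)
    (hnorm : ∀ u v w, ∑ x, ∑ y, ∑ z, P3 x y z u v w = 1)
    (hnsU : ∀ y z u u' v w, ∑ x, P3 x y z u v w = ∑ x, P3 x y z u' v w)
    (hnsV : ∀ x z u v v' w, ∑ y, P3 x y z u v w = ∑ y, P3 x y z u v' w)
    (hnsW : ∀ x y u v w w', ∑ z, P3 x y z u v w = ∑ z, P3 x y z u v w')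
    (hmarg : ∀ x y u v w, ∑ z, P3 x y z u v w = P x y u v)
    (hchsh : (1/4) * ∑ u : Bool, ∑ v : Bool, ∑ x : Bool, ∑ y : Bool,
        (if xor x y = (u && v) then P x y u v else 0) = 1 - ε) :
    ∀ u v w, ∑ z, (∑ x, ∑ y, P3 x y z u v w) *
        |(∑ y, P3 false y z u v w) / (∑ x, ∑ y, P3 x y z u v w) - 1/2| ≤ 2 * ε := by
  intro u v w
  -- per-z loss function
  set L : Z → ℝ := fun z => ∑ u' : Bool, ∑ v' : Bool, ∑ x : Bool, ∑ y : Bool,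
      (if xor x y = (u' && v') then (0:ℝ) else P3 x y z u' v' w) with hLdef
  have hLnonneg : ∀ z, 0 ≤ L z := by
    intro z
    refine Finset.sum_nonneg fun u' _ => Finset.sum_nonneg fun v' _ =>
      Finset.sum_nonneg fun x _ => Finset.sum_nonneg fun y _ => ?_
    split
    · exact le_refl 0
    · exact hpos _ _ _ _ _ _
  -- key per-z bound
  have hzkey : ∀ z, (∑ x, ∑ y, P3 x y z u v w) *
      |(∑ y, P3 false y z u v w) / (∑ x, ∑ y, P3 x y z u v w) - 1/2| ≤ (1/2) * L z := by
    intro z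
    have hq0 : 0 ≤ ∑ x, ∑ y, P3 x y z u v w :=
      Finset.sum_nonneg fun x _ => Finset.sum_nonneg fun y _ => hpos _ _ _ _ _ _
    have hU : ∀ y v', P3 false y z false v' w + P3 true y z false v' w
        = P3 false y z true v' w + P3 true y z true v' w := by
      intro y v'
      have h := hnsU y z false true v' w
      simp only [Fintype.sum_bool] at h
      linarith
    have hV : ∀ x u', P3 x false z u' false w + P3 x true z u' false w
        = P3 x false z u' true w + P3 x true z u' true w := by
      intro x u'
      have h := hnsV x z u' false true w
      simp only [Fintype.sum_bool] at h
      linarith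
    have hmain : |(∑ y, P3 false y z u v w) - (∑ x, ∑ y, P3 x y z u v w)/2| ≤ (1/2) * L z :=
      aux_key (fun x y u' v' => P3 x y z u' v' w) (fun x y u' v' => hpos x y z u' v' w)
        hU hV u v
    rcases eq_or_lt_of_le hq0 with hq | hq
    · rw [← hq]
      simp [hLnonneg z]
    · have hne : (∑ x, ∑ y, P3 x y z u v w) ≠ 0 := ne_of_gt hq
      have hrw : (∑ y, P3 false y z u v w) / (∑ x, ∑ y, P3 x y z u v w) - 1/2
          = ((∑ y, P3 false y z u v w) - (∑ x, ∑ y, P3 x y z u v w)/2)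
            / (∑ x, ∑ y, P3 x y z u v w) := by
        rw [eq_div_iff hne, sub_mul, div_mul_cancel₀ _ hne]
        ring
      rw [hrw, abs_div, abs_of_pos hq, mul_div_cancel₀ _ hne]
      exact hmain
  -- total loss equals 4ε
  have hPz : ∀ x y u' v', ∑ z, P3 x y z u' v' w = P x y u' v' := fun x y u' v' =>
    hmarg x y u' v' w
  have htot : ∀ u' v', ∑ x : Bool, ∑ y : Bool, P x y u' v' = 1 := by
    intro u' v'
    calc ∑ x : Bool, ∑ y : Bool, P x y u' v'
        = ∑ x : Bool, ∑ y : Bool, ∑ z, P3 x y z u' v' w := by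
          simp only [hPz]
      _ = 1 := hnorm u' v' w
  have hsum : ∑ z, L z = 4 * ε := by
    have htot' := htot
    simp only [Fintype.sum_bool] at hchsh htot' ⊢
    norm_num at hchsh ⊢
    simp only [hLdef, Fintype.sum_bool]
    norm_num
    simp only [Finset.sum_add_distrib, hPz]
    linarith [htot' false false, htot' false true, htot' true false, htot' true true]
  calc ∑ z, (∑ x, ∑ y, P3 x y z u v w) *
        |(∑ y, P3 false y z u v w) / (∑ x, ∑ y, P3 x y z u v w) - 1/2|
      ≤ ∑ z, (1/2) * L z := Finset.sum_le_sum fun z _ => hzkey z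
    _ = (1/2) * ∑ z, L z := by rw [Finset.mul_sum]
    _ = (1/2) * (4 * ε) := by rw [hsum]
    _ = 2 * ε := by ring
end

section
/- For ε ≤ 1/4, the bound 2ε on the adversary's distance from uniform of Alice's output is tight: there exists a non-signalling partition of the unbiased system with error ε into 8 local deterministic systems of total weight 4ε and one perfect PR-box with weight 1−4ε, such that conditioned on any of the deterministic outcomes the output X is determined by (u,v). -/
/-- For `ε ≤ 1/4`, the unbiased PR-box with error `ε` admits a non-signalling
partition into 8 local deterministic systems (on each of which `X` is determined by
the input via `f k`) of total weight `4ε`, together with a perfect PR-box of weight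
`1 − 4ε`. -/
theorem stmt_4 (ε : ℝ) (hε0 : 0 ≤ ε) (hε : ε ≤ 1/4) :
    ∃ (q : Fin 8 → ℝ) (f g : Fin 8 → Bool → Bool),
      (∀ k, 0 ≤ q k) ∧ (∑ k, q k = 4 * ε) ∧
      ∀ x y u v : Bool,
        (if xor x y = (u && v) then (1 - ε)/2 else ε/2)
        = (∑ k, q k * (if x = f k u ∧ y = g k v then (1:ℝ) else 0))
          + (1 - 4*ε) * (if xor x y = (u && v) then (1/2 : ℝ) else 0) := by
  refine ⟨fun _ => ε / 2,
    ![fun _ => false, fun _ => false, fun _ => true, fun _ => true,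
      id, id, not, not],
    ![fun _ => false, id, fun _ => true, not, fun _ => false, not,
      fun _ => true, id],
    fun k => by positivity, by norm_num [Fin.sum_univ_succ]; ring, ?_⟩
  intro x y u v
  cases x <;> cases y <;> cases u <;> cases v <;>
    simp [Fin.sum_univ_succ] <;> ring
end

section
/- The local part of a bipartite binary-input binary-output non-signalling system with (1/4)·∑_{x⊕y=u·v} P(x,y|u,v) = 1−ε and ε ≤ 1/4 equals 4ε. -/
open scoped Classical

/-- Bipartite non-signalling condition (binary alphabets). -/
def IsNS2 (P : Bool → Bool → Bool → Bool → ℝ) : Prop :=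
  (∀ y u u' v, ∑ x, P x y u v = ∑ x, P x y u' v) ∧
  (∀ x u v v', ∑ y, P x y u v = ∑ y, P x y u v')

/-- Conditional probability distribution (binary alphabets). -/
def IsDist2 (P : Bool → Bool → Bool → Bool → ℝ) : Prop :=
  (∀ x y u v, 0 ≤ P x y u v) ∧ ∀ u v, ∑ x, ∑ y, P x y u v = 1

/-- Local system: convex combination of local deterministic systems `X = f(U)`, `Y = g(V)`. -/
def IsLocal2 (P : Bool → Bool → Bool → Bool → ℝ) : Prop :=
  ∃ ρ : (Bool → Bool) × (Bool → Bool) → ℝ,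
    (∀ r, 0 ≤ ρ r) ∧ (∑ r, ρ r = 1) ∧
    ∀ x y u v, P x y u v = ∑ r, ρ r * (if x = r.1 u ∧ y = r.2 v then (1:ℝ) else 0)

lemma sum_boolfun {M : Type*} [AddCommMonoid M] (F : (Bool → Bool) → M) :
    ∑ f : Bool → Bool, F f = ∑ a : Bool, ∑ b : Bool, F (fun i => cond i b a) := by
  rw [← Equiv.sum_comp (⟨fun p i => cond i p.2 p.1, fun f => (f false, f true),
        by rintro ⟨a,b⟩; simp, by intro f; funext i; cases i <;> rfl⟩ :
      (Bool × Bool) ≃ (Bool → Bool)), Fintype.sum_prod_type]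
  rfl

lemma sum_bfp {M : Type*} [AddCommMonoid M] (F : ((Bool → Bool) × (Bool → Bool)) → M) :
    ∑ r, F r = ∑ a : Bool, ∑ b : Bool, ∑ c : Bool, ∑ d : Bool,
      F (fun i => cond i b a, fun i => cond i d c) := by
  rw [Fintype.sum_prod_type, sum_boolfun (F := fun f => ∑ g : Bool → Bool, F (f, g))]
  exact Finset.sum_congr rfl fun a _ => Finset.sum_congr rfl fun b _ => sum_boolfun _

/-- Weights for the eight single-loss deterministic strategies
`(f false, f true, g false, g true)`. -/
def Wt (P : Bool → Bool → Bool → Bool → ℝ) : Bool → Bool → Bool → Bool → ℝ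
  | false, false, false, false => P false false true true
  | false, false, false, true => P false true false true
  | false, false, true, false => 0
  | false, false, true, true => 0
  | false, true, false, false => P true false true false
  | false, true, false, true => 0
  | false, true, true, false => P false true false false
  | false, true, true, true => 0
  | true, false, false, false => 0
  | true, false, false, true => P true false false false
  | true, false, true, false => 0
  | true, false, true, true => P false true true false
  | true, true, false, false => 0
  | true, true, false, true => 0
  | true, true, true, false => P true false false true
  | true, true, true, true => P true true true true

/-- `4ε` times the extracted local system. -/
def Mt (P : Bool → Bool → Bool → Bool → ℝ) : Bool → Bool → Bool → Bool → ℝ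
  | false, false, false, false => P false false true true + P false true false true + P true false true false
  | false, false, false, true => P false false true true + P true false true false + P false true false false
  | false, false, true, false => P false false true true + P false true false true + P true false false false
  | false, false, true, true => P false false true true
  | false, true, false, false => P false true false false
  | false, true, false, true => P false true false true
  | false, true, true, false => P false true true false
  | false, true, true, true => P false true false true + P true false false false + P false true true false
  | true, false, false, false => P true false false false
  | true, false, false, true => P true false false true
  | true, false, true, false => P true false true false
  | true, false, true, true => P true false true false + P false true false false + P true false false true
  | true, true, false, false => P false true true false + P true false false true + P true true true true
  | true, true, false, true => P true false false false + P false true true false + P true true true true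
  | true, true, true, false => P false true false false + P true false false true + P true true true true
  | true, true, true, true => P true true true true

set_option maxHeartbeats 1000000 in
lemma Mrep (P : Bool → Bool → Bool → Bool → ℝ) (x y u v : Bool) :
    ∑ r : (Bool → Bool) × (Bool → Bool),
      Wt P (r.1 false) (r.1 true) (r.2 false) (r.2 true) *
        (if x = r.1 u ∧ y = r.2 v then (1:ℝ) else 0) = Mt P x y u v := by
  rw [sum_bfp]
  simp only [Fintype.sum_bool]
  cases x <;> cases y <;> cases u <;> cases v <;> (norm_num [Wt, Mt]; try ring)

lemma Wtsum (P : Bool → Bool → Bool → Bool → ℝ) :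
    ∑ r : (Bool → Bool) × (Bool → Bool),
      Wt P (r.1 false) (r.1 true) (r.2 false) (r.2 true) = P false false true true + P false true false false + P false true false true + P false true true false + P true false false false + P true false false true + P true false true false + P true true true true := by
  rw [sum_bfp]
  simp only [Fintype.sum_bool]
  norm_num [Wt]
  ring

lemma Wtnn (P : Bool → Bool → Bool → Bool → ℝ) (hp : ∀ x y u v, 0 ≤ P x y u v)
    (f g : Bool → Bool) : 0 ≤ Wt P (f false) (f true) (g false) (g true) := by
  cases hf1 : f false <;> cases hf2 : f true <;> cases hg1 : g false <;>
    cases hg2 : g true <;> simp only [Wt] <;> first | exact hp _ _ _ _ | norm_num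

lemma Mtsum (P : Bool → Bool → Bool → Bool → ℝ) (u v : Bool) :
    Mt P false false u v + Mt P false true u v + Mt P true false u v + Mt P true true u v
      = P false false true true + P false true false false + P false true false true + P false true true false + P true false false false + P true false false true + P true false true false + P true true true true := by
  cases u <;> cases v <;> simp only [Mt] <;> ring

lemma MtNS1 (P : Bool → Bool → Bool → Bool → ℝ) (y u u' v : Bool) :
    Mt P false y u v + Mt P true y u v = Mt P false y u' v + Mt P true y u' v := by
  cases y <;> cases u <;> cases u' <;> cases v <;> simp only [Mt] <;> ring

lemma MtNS2 (P : Bool → Bool → Bool → Bool → ℝ) (x u v v' : Bool) :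
    Mt P x false u v + Mt P x true u v = Mt P x false u v' + Mt P x true u v' := by
  cases x <;> cases u <;> cases v <;> cases v' <;> simp only [Mt] <;> ring

set_option maxHeartbeats 1000000 in
lemma unif_rep (x y u v : Bool) :
    (1:ℝ)/4 = ∑ r : (Bool → Bool) × (Bool → Bool),
      (1/16) * (if x = r.1 u ∧ y = r.2 v then (1:ℝ) else 0) := by
  rw [sum_bfp]
  simp only [Fintype.sum_bool]
  cases x <;> cases y <;> cases u <;> cases v <;> norm_num

set_option maxHeartbeats 2000000 in
/-- The local part of a bipartite binary non-signalling system with CHSH value `1−ε`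
(`ε ≤ 1/4`) equals `4ε`. -/
theorem stmt_5 (ε : ℝ) (hε : ε ≤ 1/4)
    (P : Bool → Bool → Bool → Bool → ℝ) (hd : IsDist2 P) (hns : IsNS2 P)
    (hchsh : (1/4) * ∑ u : Bool, ∑ v : Bool, ∑ x : Bool, ∑ y : Bool,
        (if xor x y = (u && v) then P x y u v else 0) = 1 - ε) :
    IsGreatest {p : ℝ | 0 ≤ p ∧ p ≤ 1 ∧
      ∃ L N : Bool → Bool → Bool → Bool → ℝ,
        IsLocal2 L ∧ IsDist2 N ∧ IsNS2 N ∧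
        ∀ x y u v, P x y u v = p * L x y u v + (1 - p) * N x y u v}
      (4 * ε) := by
  obtain ⟨hp, hnorm⟩ := hd
  obtain ⟨hA, hB⟩ := hns
  simp only [Fintype.sum_bool] at hchsh
  norm_num at hchsh
  have hp0000 := hp false false false false
  have hp0001 := hp false false false true
  have hp0010 := hp false false true false
  have hp0011 := hp false false true true
  have hp0100 := hp false true false false
  have hp0101 := hp false true false true
  have hp0110 := hp false true true false
  have hp0111 := hp false true true true
  have hp1000 := hp true false false false
  have hp1001 := hp true false false true
  have hp1010 := hp true false true false
  have hp1011 := hp true false true true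
  have hp1100 := hp true true false false
  have hp1101 := hp true true false true
  have hp1110 := hp true true true false
  have hp1111 := hp true true true true
  have n00 := hnorm false false; simp only [Fintype.sum_bool] at n00
  have n01 := hnorm false true; simp only [Fintype.sum_bool] at n01
  have n10 := hnorm true false; simp only [Fintype.sum_bool] at n10
  have n11 := hnorm true true; simp only [Fintype.sum_bool] at n11
  have a00 := hA false false true false; simp only [Fintype.sum_bool] at a00
  have a01 := hA false false true true; simp only [Fintype.sum_bool] at a01
  have a10 := hA true false true false; simp only [Fintype.sum_bool] at a10
  have a11 := hA true false true true; simp only [Fintype.sum_bool] at a11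
  have b00 := hB false false false true; simp only [Fintype.sum_bool] at b00
  have b01 := hB false true false true; simp only [Fintype.sum_bool] at b01
  have b10 := hB true false false true; simp only [Fintype.sum_bool] at b10
  have b11 := hB true true false true; simp only [Fintype.sum_bool] at b11
  have hlos : P false false true true + P false true false false + P false true false true + P false true true false + P true false false false + P true false false true + P true false true false + P true true true true = 4*ε := by linarith
  have he0 : 0 ≤ ε := by linarith
  have k0 : P false false true true + P false true false true + P true false true false ≤ P false false false false := by linarith
  have k1 : P false true true false + P true false false true + P true true true true ≤ P true true false false := by linarith
  have k2 : P false false true true + P true false true false + P false true false false ≤ P false false false true := by linarith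
  have k3 : P true false false false + P false true true false + P true true true true ≤ P true true false true := by linarith
  have k4 : P false false true true + P false true false true + P true false false false ≤ P false false true false := by linarith
  have k5 : P false true false false + P true false false true + P true true true true ≤ P true true true false := by linarith
  have k6 : P false true false true + P true false false false + P false true true false ≤ P false true true true := by linarith
  have k7 : P true false true false + P false true false false + P true false false true ≤ P true false true true := by linarith
  constructor
  · -- membership: a decomposition with local weight exactly `4ε`
    simp only [Set.mem_setOf_eq]
    refine ⟨by linarith, by linarith, ?_⟩
    by_cases hez : ε = 0
    · refine ⟨fun _ _ _ _ => 1/4, P, ⟨fun _ => 1/16, fun _ => by norm_num, ?_, ?_⟩,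
        ⟨hp, hnorm⟩, ⟨hA, hB⟩, ?_⟩
      · rw [sum_bfp]; simp only [Fintype.sum_bool]; norm_num
      · exact fun x y u v => unif_rep x y u v
      · intro x y u v; rw [hez]; norm_num
    · have hegt : 0 < ε := lt_of_le_of_ne he0 (Ne.symm hez)
      have h4ne : (4:ℝ)*ε ≠ 0 := by positivity
      have hMle : ∀ x y u v, Mt P x y u v ≤ P x y u v := by
        intro x y u v
        cases x <;> cases y <;> cases u <;> cases v <;> simp only [Mt] <;> linarith
      have hLloc : IsLocal2 (fun x y u v => Mt P x y u v / (4*ε)) := by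
        refine ⟨fun r => Wt P (r.1 false) (r.1 true) (r.2 false) (r.2 true) / (4*ε),
          ?_, ?_, ?_⟩
        · exact fun r => div_nonneg (Wtnn P hp r.1 r.2) (by positivity)
        · rw [← Finset.sum_div, Wtsum, hlos]
          field_simp
        · intro x y u v
          simp only [div_mul_eq_mul_div, ← Finset.sum_div, Mrep P x y u v]
      by_cases he4 : ε = 1/4
      · have h41 : (4:ℝ)*ε = 1 := by rw [he4]; norm_num
        have hPM : ∀ x y u v, P x y u v = Mt P x y u v := by
          intro x y u v
          have h2 := hnorm u v; simp only [Fintype.sum_bool] at h2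
          have m1 := hMle false false u v
          have m2 := hMle false true u v
          have m3 := hMle true false u v
          have m4 := hMle true true u v
          have ms := Mtsum P u v
          cases x <;> cases y <;> linarith
        refine ⟨fun x y u v => Mt P x y u v / (4*ε), fun _ _ _ _ => 1/4, hLloc,
          ⟨fun _ _ _ _ => by norm_num,
           fun u v => by simp only [Fintype.sum_bool]; norm_num⟩,
          ⟨fun y u u' v => by simp only [Fintype.sum_bool],
           fun x u v v' => by simp only [Fintype.sum_bool]⟩, ?_⟩
        intro x y u v
        simp only []
        rw [h41, hPM x y u v]
        norm_num
      · have hlt : (4:ℝ)*ε < 1 := lt_of_le_of_ne (by linarith) (fun h => he4 (by linarith))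
        have hne : (1:ℝ) - 4*ε ≠ 0 := by intro h; linarith
        refine ⟨fun x y u v => Mt P x y u v / (4*ε),
          fun x y u v => (P x y u v - Mt P x y u v) / (1 - 4*ε), hLloc, ⟨?_, ?_⟩,
          ⟨?_, ?_⟩, ?_⟩
        · intro x y u v
          exact div_nonneg (by linarith [hMle x y u v]) (by linarith)
        · intro u v
          have h2 := hnorm u v; simp only [Fintype.sum_bool] at h2
          simp only [Fintype.sum_bool, ← add_div]
          rw [div_eq_one_iff_eq hne]
          have ms := Mtsum P u v
          linarith
        · intro y u u' v
          have h2 := hA y u u' v; simp only [Fintype.sum_bool] at h2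
          have h3 := MtNS1 P y u u' v
          simp only [Fintype.sum_bool, ← add_div]
          congr 1
          linarith
        · intro x u v v'
          have h2 := hB x u v v'; simp only [Fintype.sum_bool] at h2
          have h3 := MtNS2 P x u v v'
          simp only [Fintype.sum_bool, ← add_div]
          congr 1
          linarith
        · intro x y u v
          simp only []
          field_simp
          try ring
  · -- upper bound
    rintro q ⟨hq0, hq1, L, N, ⟨ρ, hρ0, hρ1, hLrep⟩, ⟨hN0, hN1⟩, -, hdec⟩
    have m00 := hN1 false false; simp only [Fintype.sum_bool] at m00
    have m01 := hN1 false true; simp only [Fintype.sum_bool] at m01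
    have m10 := hN1 true false; simp only [Fintype.sum_bool] at m10
    have m11 := hN1 true true; simp only [Fintype.sum_bool] at m11
    have hSL : L false false false false + L true true false false + L false false false true + L true true false true + L false false true false + L true true true false + L false true true true + L true false true true ≤ 3 := by
      rw [hLrep false false false false, hLrep true true false false, hLrep false false false true, hLrep true true false true, hLrep false false true false, hLrep true true true false, hLrep false true true true, hLrep true false true true]
      simp only [← Finset.sum_add_distrib]
      have hb : ∀ r : (Bool → Bool) × (Bool → Bool),
          ρ r * (if (false:Bool) = r.1 false ∧ (false:Bool) = r.2 false then (1:ℝ) else 0) + ρ r * (if (true:Bool) = r.1 false ∧ (true:Bool) = r.2 false then (1:ℝ) else 0) + ρ r * (if (false:Bool) = r.1 false ∧ (false:Bool) = r.2 true then (1:ℝ) else 0) + ρ r * (if (true:Bool) = r.1 false ∧ (true:Bool) = r.2 true then (1:ℝ) else 0) + ρ r * (if (false:Bool) = r.1 true ∧ (false:Bool) = r.2 false then (1:ℝ) else 0) + ρ r * (if (true:Bool) = r.1 true ∧ (true:Bool) = r.2 false then (1:ℝ) else 0) + ρ r * (if (false:Bool) = r.1 true ∧ (true:Bool) = r.2 true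 then (1:ℝ) else 0) + ρ r * (if (true:Bool) = r.1 true ∧ (false:Bool) = r.2 true then (1:ℝ) else 0) ≤ ρ r * 3 := by
        rintro ⟨f, g⟩
        have hnn := hρ0 (f, g)
        dsimp only
        obtain hf1 | hf1 := Bool.eq_false_or_eq_true (f false) <;> obtain hf2 | hf2 := Bool.eq_false_or_eq_true (f true) <;> obtain hg1 | hg1 := Bool.eq_false_or_eq_true (g false) <;>
          obtain hg2 | hg2 := Bool.eq_false_or_eq_true (g true) <;> simp only [hf1, hf2, hg1, hg2] <;> norm_num <;> linarith
      calc _ ≤ ∑ r : (Bool → Bool) × (Bool → Bool), ρ r * 3 :=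
            Finset.sum_le_sum fun r _ => hb r
        _ = 3 := by rw [← Finset.sum_mul, hρ1, one_mul]
    have hSN : N false false false false + N true true false false + N false false false true + N true true false true + N false false true false + N true true true false + N false true true true + N true false true true ≤ 4 := by linarith [hN0 false false false false, hN0 false false false true, hN0 false false true false, hN0 false false true true, hN0 false true false false, hN0 false true false true, hN0 false true true false, hN0 false true true true, hN0 true false false false, hN0 true false false true, hN0 true false true false, hN0 true false true true, hN0 true true false false, hN0 true true false true, hN0 true true true false, hN0 true true true true]
    have hPs : P false false false false + P true true false false + P false false false true + P true true false true + P false false true false + P true true true false + P false true true true + P true false true true = q * (L false false false false + L true true false false + L false false false true + L true true false true + L false false true false + L true true true false + L false true true true + L true false true true) + (1 - q) * (N false false false false + N true true false false + N false false false true + N true true false true + N false false true false + N true true true false + N false true true true + N true false true true) := by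
      rw [hdec false false false false, hdec true true false false, hdec false false false true, hdec true true false true, hdec false false true false, hdec true true true false, hdec false true true true, hdec true false true true]
      ring
    have h1 : q * (L false false false false + L true true false false + L false false false true + L true true false true + L false false true false + L true true true false + L false true true true + L true false true true) ≤ q * 3 := mul_le_mul_of_nonneg_left hSL hq0
    have h2 : (1 - q) * (N false false false false + N true true false false + N false false false true + N true true false true + N false false true false + N true true true false + N false true true true + N true false true true) ≤ (1 - q) * 4 :=
      mul_le_mul_of_nonneg_left hSN (by linarith)
    linarith
end

section
/- Any local probability distribution with binary inputs and outputs on two parties satisfies the CHSH inequality: (1/4)·∑_{(x,y,u,v): x⊕y = u·v} P(x,y|u,v) ≤ 3/4. -/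
open scoped Classical

/-- Any local bipartite distribution with binary inputs and outputs satisfies the
CHSH inequality `(1/4)·∑_{x⊕y=u·v} P(x,y|u,v) ≤ 3/4`. -/
theorem stmt_7 {R : Type*} [Fintype R]
    (ρ : R → ℝ) (f g : R → Bool → Bool)
    (hρ : ∀ r, 0 ≤ ρ r) (hρ1 : ∑ r, ρ r = 1)
    (P : Bool → Bool → Bool → Bool → ℝ)
    (hP : ∀ x y u v, P x y u v = ∑ r, ρ r * (if x = f r u ∧ y = g r v then (1:ℝ) else 0)) :
    (1/4) * ∑ u : Bool, ∑ v : Bool, ∑ x : Bool, ∑ y : Bool,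
      (if xor x y = (u && v) then P x y u v else 0) ≤ 3/4 := by
  have key : ∑ u : Bool, ∑ v : Bool, ∑ x : Bool, ∑ y : Bool,
      (if xor x y = (u && v) then P x y u v else 0)
      = ∑ r, ρ r * ∑ u : Bool, ∑ v : Bool,
        (if xor (f r u) (g r v) = (u && v) then (1:ℝ) else 0) := by
    simp only [hP, Fintype.sum_bool]
    norm_num [mul_ite, mul_one, mul_zero, mul_add, ← Finset.sum_add_distrib]
    apply Finset.sum_congr rfl
    intro r _
    rcases hf : f r false with _|_ <;> rcases hf' : f r true with _|_ <;>
      rcases hg : g r false with _|_ <;> rcases hg' : g r true with _|_ <;>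
      simp [hf, hf', hg, hg']
  rw [key]
  have bound : ∀ r, ∑ u : Bool, ∑ v : Bool,
      (if xor (f r u) (g r v) = (u && v) then (1:ℝ) else 0) ≤ 3 := by
    intro r
    rcases hf : f r false with _|_ <;> rcases hf' : f r true with _|_ <;>
      rcases hg : g r false with _|_ <;> rcases hg' : g r true with _|_ <;>
      simp only [Fintype.sum_bool, hf, hf', hg, hg'] <;> norm_num
  have : ∑ r, ρ r * ∑ u : Bool, ∑ v : Bool,
      (if xor (f r u) (g r v) = (u && v) then (1:ℝ) else 0) ≤ ∑ r, ρ r * 3 := by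
    apply Finset.sum_le_sum
    intro r _
    exact mul_le_mul_of_nonneg_left (bound r) (hρ r)
  calc (1/4) * ∑ r, ρ r * ∑ u : Bool, ∑ v : Bool,
      (if xor (f r u) (g r v) = (u && v) then (1:ℝ) else 0)
      ≤ (1/4) * ∑ r, ρ r * 3 := by linarith
    _ = 3/4 := by rw [← Finset.sum_mul] at *; rw [hρ1]; ring
end

section
/- For any distributions P and Q on a finite set and random variables (S, Z, Q-info) where S = (S_1,...,S_s) is a string of bits, the distance from uniform of S given side information is at most the sum over i of the distance from uniform of S_i given the side information together with S_1,...,S_{i−1}. -/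
open scoped Classical

/-- The distance from uniform of a bit string `S = (S_1,...,S_s)` given side
information `E` is at most the sum over `i` of the distance from uniform of `S_i`
given `E` together with `S_1,...,S_{i-1}`.  Here `M i σ e` is the joint weight of
(`first i bits of S` equal those of `σ`, `E = e`); the sum over all `σ` overcounts
each length-`i` prefix `2^(s-i)` times, whence the normalizing factors. -/
theorem stmt_9 {E : Type*} [Fintype E] {s : ℕ}
    (P : (Fin s → Bool) → E → ℝ) :
    let M : ℕ → (Fin s → Bool) → E → ℝ := fun i σ e =>
      ∑ t : Fin s → Bool, if (∀ j : Fin s, (j : ℕ) < i → t j = σ j) then P t e else 0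
    (1/2) * ∑ σ : Fin s → Bool, ∑ e : E, |M s σ e - (1/2)^s * M 0 σ e|
      ≤ ∑ i ∈ Finset.range s, (1/2)^(s - i - 1) *
          ((1/2) * ∑ σ : Fin s → Bool, ∑ e : E, |M (i+1) σ e - (1/2) * M i σ e|) := by
  intro M
  have key : ∀ (σ : Fin s → Bool) (e : E), |M s σ e - (1/2:ℝ)^s * M 0 σ e|
      ≤ ∑ i ∈ Finset.range s, (1/2:ℝ)^(s-i-1) * |M (i+1) σ e - (1/2) * M i σ e| := by
    intro σ e
    have tel : M s σ e - (1/2:ℝ)^s * M 0 σ e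
        = ∑ i ∈ Finset.range s,
            ((1/2:ℝ)^(s-(i+1)) * M (i+1) σ e - (1/2:ℝ)^(s-i) * M i σ e) := by
      rw [Finset.sum_range_sub (fun i => (1/2:ℝ)^(s-i) * M i σ e)]
      simp
    rw [tel]
    refine (Finset.abs_sum_le_sum_abs _ _).trans (Finset.sum_le_sum fun i hi => ?_)
    have hi' := Finset.mem_range.mp hi
    have h2 : s - (i+1) = s - i - 1 := by omega
    have h1 : (1/2:ℝ)^(s-i) = (1/2:ℝ)^(s-i-1) * (1/2) := by
      rw [← pow_succ]; congr 1; omega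
    have heq : (1/2:ℝ)^(s-(i+1)) * M (i+1) σ e - (1/2:ℝ)^(s-i) * M i σ e
        = (1/2:ℝ)^(s-i-1) * (M (i+1) σ e - (1/2) * M i σ e) := by
      rw [h2, h1]; ring
    rw [heq, abs_mul, abs_of_nonneg (by positivity : (0:ℝ) ≤ (1/2:ℝ)^(s-i-1))]
  have step : (1/2:ℝ) * ∑ σ : Fin s → Bool, ∑ e : E, |M s σ e - (1/2:ℝ)^s * M 0 σ e|
      ≤ (1/2:ℝ) * ∑ σ : Fin s → Bool, ∑ e : E,
          ∑ i ∈ Finset.range s, (1/2:ℝ)^(s-i-1) * |M (i+1) σ e - (1/2) * M i σ e| := by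
    have h12 : (0:ℝ) ≤ 1/2 := by norm_num
    refine mul_le_mul_of_nonneg_left ?_ h12
    exact Finset.sum_le_sum fun σ _ => Finset.sum_le_sum fun e _ => key σ e
  refine step.trans (le_of_eq ?_)
  rw [show (∑ σ : Fin s → Bool, ∑ e : E,
        ∑ i ∈ Finset.range s, (1/2:ℝ)^(s-i-1) * |M (i+1) σ e - (1/2) * M i σ e|)
      = ∑ i ∈ Finset.range s, ∑ σ : Fin s → Bool, ∑ e : E,
        (1/2:ℝ)^(s-i-1) * |M (i+1) σ e - (1/2) * M i σ e| from
    (Finset.sum_congr rfl fun σ _ => Finset.sum_comm).trans Finset.sum_comm]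
  rw [Finset.mul_sum]
  refine Finset.sum_congr rfl fun i _ => ?_
  simp_rw [← Finset.mul_sum]
  ring
end

section
/- Let x be an n-bit string and y an n-bit string with Hamming distance d_H(x,y) ≤ δ'·n, where 0 < δ' < 1/2. If f : {0,1}^n → {0,1}^m is chosen uniformly from a two-universal family, and y' is chosen to minimize d_H(y,y') among all strings r with f(r) = f(x), then Pr[x ≠ y'] ≤ 2^{n·h(δ') − m}, where h is the binary entropy function. -/
open scoped Classical

/-- The binary entropy function. -/
noncomputable def binEnt (p : ℝ) : ℝ := -p * Real.logb 2 p - (1 - p) * Real.logb 2 (1 - p)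

open Finset in
lemma ball_card_le {n : ℕ} (δ' : ℝ) (hδ0 : 0 < δ') (hδ1 : δ' < 1/2) (y : Fin n → Bool) :
    ((Finset.univ.filter fun z : Fin n → Bool => (hammingDist y z : ℝ) ≤ δ' * n).card : ℝ)
      ≤ (2:ℝ) ^ ((n:ℝ) * binEnt δ') := by
  set p := δ'
  set q := 1 - δ' with hq_def
  have hq : 0 < q := by simp only [hq_def]; linarith
  have hpq : p < q := by simp only [hq_def]; linarith
  have hlog : Real.log p < Real.log q := Real.log_lt_log hδ0 hpq
  set B := Finset.univ.filter fun z : Fin n → Bool => (hammingDist y z : ℝ) ≤ δ' * n with hB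
  -- the weight function
  set w : (Fin n → Bool) → ℝ := fun z => p ^ hammingDist y z * q ^ (n - hammingDist y z) with hw
  have hwpos : ∀ z, 0 < w z := fun z => by positivity
  -- total sum is 1
  have htotal : ∑ z : Fin n → Bool, w z = 1 := by
    have h1 : ∀ z : Fin n → Bool, w z = ∏ j, (if y j = z j then q else p) := by
      intro z
      rw [Finset.prod_ite (f := fun _ => q) (g := fun _ => p), Finset.prod_const,
        Finset.prod_const]
      have hcard : (Finset.univ.filter fun j => ¬ y j = z j).card = hammingDist y z := rfl
      have hcard2 : (Finset.univ.filter fun j => y j = z j).card = n - hammingDist y z := by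
        have := Finset.card_filter_add_card_filter_not
          (s := (Finset.univ : Finset (Fin n))) (p := fun j => y j = z j)
        simp only [Finset.card_univ, Fintype.card_fin] at this
        omega
      rw [hcard, hcard2, hw, mul_comm]
    simp only [h1]
    rw [← Fintype.prod_sum (fun (j : Fin n) (b : Bool) => if y j = b then q else p)]
    have : ∀ j : Fin n, (∑ b : Bool, if y j = b then q else p) = 1 := by
      intro j; cases hyj : y j <;> simp [hq_def, p]
    exact Finset.prod_eq_one fun j _ => this j
  -- each term in the ball is at least 2^(-n h)
  have hterm : ∀ z ∈ B, (2:ℝ) ^ (-((n:ℝ) * binEnt δ')) ≤ w z := by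
    intro z hz
    simp only [hB, Finset.mem_filter] at hz
    obtain ⟨-, hd⟩ := hz
    set d := hammingDist y z with hd_def
    have hdn : d ≤ n := by
      calc d ≤ Fintype.card (Fin n) := hammingDist_le_card_fintype
      _ = n := Fintype.card_fin n
    rw [Real.rpow_def_of_pos (by norm_num : (0:ℝ) < 2)]
    rw [← Real.exp_log (hwpos z)]
    apply Real.exp_le_exp.mpr
    have hlogw : Real.log (w z) = d * Real.log p + ((n:ℝ) - d) * Real.log q := by
      rw [hw]
      rw [Real.log_mul (by positivity) (by positivity), Real.log_pow, Real.log_pow]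
      have : ((n - d : ℕ) : ℝ) = (n:ℝ) - d := by
        push_cast [hdn]; ring
      rw [this]
    rw [hlogw]
    have hent : Real.log 2 * (-((n:ℝ) * binEnt δ')) = (n:ℝ) * p * Real.log p
        + (n:ℝ) * q * Real.log q := by
      simp only [binEnt, Real.logb, hq_def]
      have h2 : Real.log 2 ≠ 0 := by
        have := Real.log_pos (by norm_num : (1:ℝ) < 2); linarith
      field_simp
      ring
    rw [hent]
    have hnq : (n:ℝ) * q = (n:ℝ) - (n:ℝ) * p := by rw [hq_def]; ring
    have hd' : (d:ℝ) ≤ p * (n:ℝ) := by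
      calc (d:ℝ) ≤ δ' * n := hd
      _ = p * n := rfl
    have key : (n:ℝ)*p*Real.log p - (n:ℝ)*p*Real.log q - d*Real.log p + d*Real.log q ≤ 0 := by
      nlinarith [mul_nonneg (sub_nonneg.mpr hd') (sub_nonneg.mpr hlog.le)]
    have hnq' : (n:ℝ)*q*Real.log q = (n:ℝ)*Real.log q - (n:ℝ)*p*Real.log q := by
      rw [hnq]; ring
    linarith [key, hnq']
  -- sum bound
  have hBsum : (B.card : ℝ) * (2:ℝ) ^ (-((n:ℝ) * binEnt δ')) ≤ 1 := by
    calc (B.card : ℝ) * (2:ℝ) ^ (-((n:ℝ) * binEnt δ'))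
        = ∑ _z ∈ B, (2:ℝ) ^ (-((n:ℝ) * binEnt δ')) := by
          rw [Finset.sum_const, nsmul_eq_mul]
      _ ≤ ∑ z ∈ B, w z := Finset.sum_le_sum hterm
      _ ≤ ∑ z : Fin n → Bool, w z := by
          apply Finset.sum_le_sum_of_subset_of_nonneg (Finset.subset_univ B)
          intro z _ _; exact (hwpos z).le
      _ = 1 := htotal
  have hpow : (0:ℝ) < (2:ℝ) ^ (-((n:ℝ) * binEnt δ')) := Real.rpow_pos_of_pos (by norm_num) _
  rw [show (2:ℝ) ^ ((n:ℝ) * binEnt δ') = 1 / (2:ℝ) ^ (-((n:ℝ) * binEnt δ')) by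
    rw [Real.rpow_neg (by norm_num), one_div, inv_inv]]
  rw [le_div_iff₀ hpow]
  exact hBsum


/-- Information reconciliation via two-universal hashing: if `d_H(x,y) ≤ δ'·n` and
`f` is drawn uniformly from a two-universal family of functions `{0,1}^n → {0,1}^m`,
and `y'` minimizes the Hamming distance to `y` among preimages of `f(x)`, then
`Pr[x ≠ y'] ≤ 2^(n·h(δ') − m)`. -/
theorem stmt_11 {n m : ℕ} {F : Type*} [Fintype F] [Nonempty F]
    (H : F → (Fin n → Bool) → (Fin m → Bool))
    (huniv : ∀ x x' : Fin n → Bool, x ≠ x' →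
      ((Finset.univ.filter fun f => H f x = H f x').card : ℝ) / (Fintype.card F) ≤ (1/2)^m)
    (δ' : ℝ) (hδ0 : 0 < δ') (hδ1 : δ' < 1/2)
    (x y : Fin n → Bool) (hxy : (hammingDist x y : ℝ) ≤ δ' * n)
    (y' : F → (Fin n → Bool))
    (hy'1 : ∀ f, H f (y' f) = H f x)
    (hy'2 : ∀ f r, H f r = H f x → hammingDist y (y' f) ≤ hammingDist y r) :
    ((Finset.univ.filter fun f => y' f ≠ x).card : ℝ) / (Fintype.card F)
      ≤ (2 : ℝ) ^ ((n : ℝ) * binEnt δ' - (m : ℝ)) := by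
  classical
  set B := Finset.univ.filter fun z : Fin n → Bool => (hammingDist y z : ℝ) ≤ δ' * n with hB
  set S : (Fin n → Bool) → Finset F := fun z => Finset.univ.filter fun f => H f z = H f x
    with hS
  have hFpos : (0:ℝ) < (Fintype.card F : ℝ) := by
    exact_mod_cast Fintype.card_pos
  -- bad set is contained in the union
  have hsub : (Finset.univ.filter fun f => y' f ≠ x) ⊆ (B.erase x).biUnion S := by
    intro f hf
    simp only [Finset.mem_filter, Finset.mem_univ, true_and] at hf
    apply Finset.mem_biUnion.mpr
    refine ⟨y' f, ?_, ?_⟩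
    · rw [Finset.mem_erase]
      refine ⟨hf, ?_⟩
      rw [hB, Finset.mem_filter]
      refine ⟨Finset.mem_univ _, ?_⟩
      calc (hammingDist y (y' f) : ℝ) ≤ (hammingDist y x : ℝ) := by
            exact_mod_cast hy'2 f x rfl
        _ = (hammingDist x y : ℝ) := by rw [hammingDist_comm]
        _ ≤ δ' * n := hxy
    · rw [hS]; simp only [Finset.mem_filter, Finset.mem_univ, true_and]
      exact hy'1 f
  have hcard : ((Finset.univ.filter fun f => y' f ≠ x).card : ℝ)
      ≤ ∑ z ∈ B.erase x, (Finset.card (S z) : ℝ) := by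
    calc ((Finset.univ.filter fun f => y' f ≠ x).card : ℝ)
        ≤ (((B.erase x).biUnion S).card : ℝ) := by
          exact_mod_cast Finset.card_le_card hsub
      _ ≤ ∑ z ∈ B.erase x, (Finset.card (S z) : ℝ) := by
          exact_mod_cast Finset.card_biUnion_le
  have hball : (B.card : ℝ) ≤ (2:ℝ) ^ ((n:ℝ) * binEnt δ') := ball_card_le δ' hδ0 hδ1 y
  calc ((Finset.univ.filter fun f => y' f ≠ x).card : ℝ) / (Fintype.card F)
      ≤ (∑ z ∈ B.erase x, (Finset.card (S z) : ℝ)) / (Fintype.card F) := by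
        gcongr
    _ = ∑ z ∈ B.erase x, (Finset.card (S z) : ℝ) / (Fintype.card F) := Finset.sum_div _ _ _
    _ ≤ ∑ z ∈ B.erase x, ((1:ℝ)/2)^m := by
        apply Finset.sum_le_sum
        intro z hz
        have hzx : z ≠ x := Finset.ne_of_mem_erase hz
        exact huniv z x hzx
    _ = ((B.erase x).card : ℝ) * ((1:ℝ)/2)^m := by rw [Finset.sum_const, nsmul_eq_mul]
    _ ≤ (B.card : ℝ) * ((1:ℝ)/2)^m := by
        apply mul_le_mul_of_nonneg_right _ (by positivity)
        exact_mod_cast Finset.card_le_card (Finset.erase_subset _ _)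
    _ ≤ (2:ℝ) ^ ((n:ℝ) * binEnt δ') * ((1:ℝ)/2)^m :=
        mul_le_mul_of_nonneg_right hball (by positivity)
    _ = (2:ℝ) ^ ((n:ℝ) * binEnt δ' - (m:ℝ)) := by
        rw [Real.rpow_sub (by norm_num), Real.rpow_natCast, one_div, inv_pow,
          div_eq_mul_inv]
end

section
/- If λ₁ satisfies A₁ᵀλ₁ − b₁ ⪰ 0 and λ₂ satisfies A₂ᵀλ₂ − b₂ ⪰ 0, where b₁ ⪰ 0 and b₂ ⪰ 0 are positive semi-definite, then λ₁ ⊗ λ₂ satisfies (A₁ ⊗ A₂)ᵀ(λ₁ ⊗ λ₂) − b₁ ⊗ b₂ ⪰ 0 (Mittal–Szegedy product theorem for semi-definite feasibility). -/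
open Matrix
open scoped Kronecker

lemma psd_kron {d₁ d₂ : ℕ} {X : Matrix (Fin d₁) (Fin d₁) ℝ} {Y : Matrix (Fin d₂) (Fin d₂) ℝ}
    (hX : X.PosSemidef) (hY : Y.PosSemidef) : (X ⊗ₖ Y).PosSemidef := by
  obtain ⟨C, rfl⟩ := (show ∃ C : Matrix (Fin d₁) (Fin d₁) ℝ, X = Cᴴ * C by
    open scoped MatrixOrder in exact CStarAlgebra.nonneg_iff_eq_star_mul_self.mp hX.nonneg)
  obtain ⟨D, rfl⟩ := (show ∃ C : Matrix (Fin d₂) (Fin d₂) ℝ, Y = Cᴴ * C by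
    open scoped MatrixOrder in exact CStarAlgebra.nonneg_iff_eq_star_mul_self.mp hY.nonneg)
  rw [Matrix.mul_kronecker_mul]
  have : (Cᴴ ⊗ₖ Dᴴ) = (C ⊗ₖ D)ᴴ := by
    ext ⟨i, i'⟩ ⟨j, j'⟩
    simp [Matrix.conjTranspose_apply, Matrix.kroneckerMap_apply]
  rw [this]
  exact posSemidef_conjTranspose_mul_self _

/-- Mittal–Szegedy product theorem for semi-definite feasibility: if
`A₁ᵀλ₁ − b₁ ⪰ 0`, `A₂ᵀλ₂ − b₂ ⪰ 0` with `b₁ ⪰ 0` and `b₂ ⪰ 0`, then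
`(A₁ ⊗ A₂)ᵀ(λ₁ ⊗ λ₂) − b₁ ⊗ b₂ ⪰ 0`. -/
theorem stmt_14 {m₁ m₂ d₁ d₂ : ℕ}
    (A₁ : Fin m₁ → Matrix (Fin d₁) (Fin d₁) ℝ) (b₁ : Matrix (Fin d₁) (Fin d₁) ℝ)
    (A₂ : Fin m₂ → Matrix (Fin d₂) (Fin d₂) ℝ) (b₂ : Matrix (Fin d₂) (Fin d₂) ℝ)
    (l₁ : Fin m₁ → ℝ) (l₂ : Fin m₂ → ℝ)
    (hb₁ : b₁.PosSemidef) (hb₂ : b₂.PosSemidef)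
    (h₁ : ((∑ i, l₁ i • A₁ i) - b₁).PosSemidef)
    (h₂ : ((∑ j, l₂ j • A₂ j) - b₂).PosSemidef) :
    ((∑ p : Fin m₁ × Fin m₂, (l₁ p.1 * l₂ p.2) • (A₁ p.1 ⊗ₖ A₂ p.2)) - b₁ ⊗ₖ b₂).PosSemidef := by
  set S₁ := ∑ i, l₁ i • A₁ i
  set S₂ := ∑ j, l₂ j • A₂ j
  have hsum : (∑ p : Fin m₁ × Fin m₂, (l₁ p.1 * l₂ p.2) • (A₁ p.1 ⊗ₖ A₂ p.2)) = S₁ ⊗ₖ S₂ := by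
    ext ⟨i, i'⟩ ⟨j, j'⟩
    simp only [S₁, S₂, Matrix.sum_apply, Matrix.smul_apply, Matrix.kroneckerMap_apply,
      smul_eq_mul, Finset.sum_mul_sum, Fintype.sum_prod_type]
    refine Finset.sum_congr rfl fun a _ => Finset.sum_congr rfl fun b _ => ?_
    ring
  rw [hsum]
  have hS₂ : S₂.PosSemidef := by
    have := h₂.add hb₂
    simpa using this
  have key : S₁ ⊗ₖ S₂ - b₁ ⊗ₖ b₂ = (S₁ - b₁) ⊗ₖ S₂ + b₁ ⊗ₖ (S₂ - b₂) := by
    ext ⟨i, i'⟩ ⟨j, j'⟩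
    simp only [Matrix.sub_apply, Matrix.add_apply, Matrix.kroneckerMap_apply]
    ring
  rw [key]
  exact (psd_kron h₁ hS₂).add (psd_kron hb₁ h₂)
end

section
/- For the system P^{n,ε} consisting of n independent unbiased PR-boxes with error ε ≤ 1/4, and the XOR function f(x) = ⊕_{i} x_i, the adversarial strategy w̄ achieves distance from uniform d(f(X)|Z(w̄)) = ∑_{i=0}^{⌊(n−1)/2⌋} C(n, n−2i−1)·(1−ε)^{n−2i−1}·ε^{2i+1}, which is at least ε for all n ≥ 1 and tends to 1/2 as n → ∞. -/
open scoped Classical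
open Finset

/-- `∑_{i=0}^{⌊(n−1)/2⌋} C(n, n−2i−1)·(1−ε)^(n−2i−1)·ε^(2i+1)`. -/
noncomputable def xorDistBound (ε : ℝ) (n : ℕ) : ℝ :=
  ∑ i ∈ Finset.range ((n - 1) / 2 + 1),
    (n.choose (n - 2*i - 1) : ℝ) * (1 - ε) ^ (n - 2*i - 1) * ε ^ (2*i + 1)

lemma sum_prod_bool' {n : ℕ} (q : Fin n → Bool → ℝ) :
    ∑ x : Fin n → Bool, ∏ i, q i (x i) = ∏ i, (q i true + q i false) := by
  rw [← Fintype.prod_sum]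
  exact Finset.prod_congr rfl fun i _ => by rw [Fintype.sum_bool]

lemma prod_ite_hamming {n : ℕ} (ε : ℝ) (x y : Fin n → Bool) :
    ∏ i, (if x i = y i then (1-ε) else ε)
      = (1-ε)^(n - hammingDist x y) * ε^(hammingDist x y) := by
  rw [Finset.prod_ite, Finset.prod_const, Finset.prod_const]
  have hd : (Finset.univ.filter fun i : Fin n => ¬ x i = y i).card = hammingDist x y := by
    unfold hammingDist; congr 1
  have h3 : (Finset.univ.filter fun i : Fin n => x i = y i)
      = (Finset.univ.filter fun i : Fin n => ¬ x i = y i)ᶜ := by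
    ext i; simp
  rw [h3, Finset.card_compl, hd, Fintype.card_fin]

lemma prod_sign {n : ℕ} (x : Fin n → Bool) :
    ∏ i, (if x i = true then (-1:ℝ) else 1)
      = (-1)^(Finset.univ.filter fun i => x i = true).card := by
  rw [Finset.prod_ite, Finset.prod_const, Finset.prod_const, one_pow, mul_one]

lemma hP_eq {n : ℕ} (ε : ℝ) (x y : Fin n → Bool) :
    (1/2 : ℝ)^n * (1-ε)^(n - hammingDist x y) * ε^(hammingDist x y)
      = ∏ i, ((1/2 : ℝ) * (if x i = y i then 1-ε else ε)) := by
  rw [Finset.prod_mul_distrib, Finset.prod_const, prod_ite_hamming, Finset.card_univ,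
    Fintype.card_fin, mul_assoc]

lemma hT_eq {n : ℕ} (ε : ℝ) (y : Fin n → Bool) :
    ∑ x : Fin n → Bool,
        (1/2 : ℝ)^n * (1-ε)^(n - hammingDist x y) * ε^(hammingDist x y) = (1/2)^n := by
  have := sum_prod_bool' (fun (i : Fin n) (a : Bool) =>
    (1/2 : ℝ) * (if a = y i then 1-ε else ε))
  calc ∑ x : Fin n → Bool, (1/2 : ℝ)^n * (1-ε)^(n - hammingDist x y) * ε^(hammingDist x y)
      = ∑ x : Fin n → Bool, ∏ i, ((1/2 : ℝ) * (if x i = y i then 1-ε else ε)) :=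
        Finset.sum_congr rfl fun x _ => hP_eq ε x y
    _ = ∏ i : Fin n, ((1/2 : ℝ) * (if true = y i then 1-ε else ε)
          + (1/2 : ℝ) * (if false = y i then 1-ε else ε)) := this
    _ = ∏ i : Fin n, (1/2 : ℝ) := by
        refine Finset.prod_congr rfl fun i _ => ?_
        cases y i <;> simp <;> ring
    _ = (1/2 : ℝ)^n := by rw [Finset.prod_const, Finset.card_univ, Fintype.card_fin]

lemma hU_eq {n : ℕ} (ε : ℝ) (y : Fin n → Bool) :
    ∑ x : Fin n → Bool,
        (-1 : ℝ)^((Finset.univ.filter fun i => x i = true).card)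
          * ((1/2 : ℝ)^n * (1-ε)^(n - hammingDist x y) * ε^(hammingDist x y))
      = (-1 : ℝ)^((Finset.univ.filter fun i => y i = true).card) * ((1-2*ε)/2)^n := by
  have key := sum_prod_bool' (fun (i : Fin n) (a : Bool) =>
    (if a = true then (-1:ℝ) else 1) * ((1/2 : ℝ) * (if a = y i then 1-ε else ε)))
  calc ∑ x : Fin n → Bool,
        (-1 : ℝ)^((Finset.univ.filter fun i => x i = true).card)
          * ((1/2 : ℝ)^n * (1-ε)^(n - hammingDist x y) * ε^(hammingDist x y))
      = ∑ x : Fin n → Bool, ∏ i,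
          ((if x i = true then (-1:ℝ) else 1) * ((1/2 : ℝ) * (if x i = y i then 1-ε else ε))) := by
        refine Finset.sum_congr rfl fun x _ => ?_
        rw [Finset.prod_mul_distrib, prod_sign, hP_eq ε x y]
    _ = ∏ i : Fin n,
          ((if true = true then (-1:ℝ) else 1) * ((1/2 : ℝ) * (if true = y i then 1-ε else ε))
          + (if false = true then (-1:ℝ) else 1) * ((1/2 : ℝ) * (if false = y i then 1-ε else ε))) :=
        key
    _ = ∏ i : Fin n, ((if y i = true then (-1:ℝ) else 1) * ((1-2*ε)/2)) := by
        refine Finset.prod_congr rfl fun i _ => ?_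
        cases y i <;> simp <;> ring
    _ = (-1 : ℝ)^((Finset.univ.filter fun i => y i = true).card) * ((1-2*ε)/2)^n := by
        rw [Finset.prod_mul_distrib, prod_sign, Finset.prod_const, Finset.card_univ,
          Fintype.card_fin]

lemma min_sum_eq {n : ℕ} (ε : ℝ) (hε : 2*ε ≤ 1) (y : Fin n → Bool) :
    min (∑ x : Fin n → Bool,
          if Even (Finset.univ.filter fun i => x i = true).card then
            (1/2 : ℝ)^n * (1-ε)^(n - hammingDist x y) * ε^(hammingDist x y) else 0)
        (∑ x : Fin n → Bool,
          if ¬ Even (Finset.univ.filter fun i => x i = true).card then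
            (1/2 : ℝ)^n * (1-ε)^(n - hammingDist x y) * ε^(hammingDist x y) else 0)
      = ((1/2:ℝ)^n - ((1-2*ε)/2)^n)/2 := by
  set wt : (Fin n → Bool) → ℕ := fun x => (Finset.univ.filter fun i => x i = true).card with hwt
  set P : (Fin n → Bool) → ℝ :=
    fun x => (1/2 : ℝ)^n * (1-ε)^(n - hammingDist x y) * ε^(hammingDist x y) with hPdef
  have hc : (0:ℝ) ≤ ((1-2*ε)/2)^n := pow_nonneg (by linarith) n
  have hSe : (∑ x : Fin n → Bool, if Even (wt x) then P x else 0)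
      = ((1/2:ℝ)^n + (-1:ℝ)^(wt y) * ((1-2*ε)/2)^n)/2 := by
    have step : ∀ x : Fin n → Bool,
        (if Even (wt x) then P x else 0) = (P x + (-1:ℝ)^(wt x) * P x)/2 := by
      intro x
      rcases Nat.even_or_odd (wt x) with h | h
      · rw [if_pos h, h.neg_one_pow]; ring
      · rw [if_neg (Nat.not_even_iff_odd.mpr h), h.neg_one_pow]; ring
    rw [Finset.sum_congr rfl fun x _ => step x, ← Finset.sum_div, Finset.sum_add_distrib,
      hT_eq ε y, hU_eq ε y]
  have hSo : (∑ x : Fin n → Bool, if ¬ Even (wt x) then P x else 0)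
      = ((1/2:ℝ)^n - (-1:ℝ)^(wt y) * ((1-2*ε)/2)^n)/2 := by
    have step : ∀ x : Fin n → Bool,
        (if ¬ Even (wt x) then P x else 0) = (P x - (-1:ℝ)^(wt x) * P x)/2 := by
      intro x
      rcases Nat.even_or_odd (wt x) with h | h
      · rw [if_neg (not_not_intro h), h.neg_one_pow]; ring
      · rw [if_pos (Nat.not_even_iff_odd.mpr h), h.neg_one_pow]; ring
    rw [Finset.sum_congr rfl fun x _ => step x, ← Finset.sum_div, Finset.sum_sub_distrib,
      hT_eq ε y, hU_eq ε y]
  rw [hSe, hSo]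
  rcases Nat.even_or_odd (wt y) with h | h
  · rw [h.neg_one_pow]
    rw [min_eq_right (by linarith)]
    ring
  · rw [h.neg_one_pow]
    rw [min_eq_left (by linarith)]
    ring

lemma xorDistBound_eq (ε : ℝ) {n : ℕ} (hn : 1 ≤ n) :
    xorDistBound ε n = (1 - (1-2*ε)^n)/2 := by
  have h1 := add_pow ε (1-ε) n
  have h2 := add_pow (-ε) (1-ε) n
  rw [show ε + (1-ε) = 1 by ring, one_pow] at h1
  rw [show -ε + (1-ε) = 1-2*ε by ring] at h2
  have h3 : ∑ k ∈ Finset.range (n+1),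
      (ε^k * (1-ε)^(n-k) * (n.choose k:ℝ) - (-ε)^k * (1-ε)^(n-k) * (n.choose k:ℝ))
      = 1 - (1-2*ε)^n := by
    rw [Finset.sum_sub_distrib, ← h1, ← h2]
  have key : ∑ k ∈ Finset.range (n+1),
      ((if Odd k then ((n.choose k:ℝ) * (1-ε)^(n-k) * ε^k) else 0) * 2)
      = 1 - (1-2*ε)^n := by
    rw [← h3]
    refine Finset.sum_congr rfl fun k _ => ?_
    rcases Nat.even_or_odd k with h | h
    · rw [if_neg (by simpa using Nat.not_odd_iff_even.mpr h), h.neg_pow]; ring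
    · rw [if_pos h, h.neg_pow]; ring
  have h4 : xorDistBound ε n
      = ∑ k ∈ Finset.range (n+1),
          (if Odd k then ((n.choose k:ℝ) * (1-ε)^(n-k) * ε^k) else 0) := by
    rw [← Finset.sum_filter]
    unfold xorDistBound
    refine Finset.sum_nbij' (fun i => 2*i+1) (fun k => k/2) ?_ ?_ ?_ ?_ ?_
    · intro i hi
      simp only [Finset.mem_range] at hi
      simp only [Finset.mem_filter, Finset.mem_range, Nat.odd_iff]
      omega
    · intro k hk
      simp only [Finset.mem_filter, Finset.mem_range, Nat.odd_iff] at hk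
      simp only [Finset.mem_range]
      omega
    · intro i _; show (2*i+1)/2 = i; omega
    · intro k hk
      simp only [Finset.mem_filter, Finset.mem_range, Nat.odd_iff] at hk
      show 2*(k/2)+1 = k; omega
    · intro i hi
      simp only [Finset.mem_range] at hi
      have hle : 2*i+1 ≤ n := by omega
      have hsub : n - 2*i - 1 = n - (2*i+1) := by omega
      rw [hsub, Nat.choose_symm hle]
  rw [h4]
  have : (∑ k ∈ Finset.range (n+1),
      (if Odd k then ((n.choose k:ℝ) * (1-ε)^(n-k) * ε^k) else 0)) * 2
      = 1 - (1-2*ε)^n := by rw [← Finset.sum_mul] at key; exact key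
  linarith

/-- For `n` independent unbiased PR-boxes with error `0 < ε ≤ 1/4` and the XOR
function, the adversarial strategy `w̄` achieves distance from uniform
`∑_y min{∑_{x : ⊕x_i = 0} P(x,y), ∑_{x : ⊕x_i = 1} P(x,y)}` equal to
`∑_i C(n, n−2i−1)(1−ε)^(n−2i−1)ε^(2i+1)`, which is at least `ε` for all `n ≥ 1`
and tends to `1/2` as `n → ∞`. -/
theorem stmt_16 (ε : ℝ) (hε0 : 0 < ε) (hε : ε ≤ 1/4) :
    (∀ n : ℕ, 1 ≤ n →
      ∑ y : Fin n → Bool,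
        min (∑ x : Fin n → Bool,
              if Even (Finset.univ.filter fun i => x i = true).card then
                (1/2 : ℝ)^n * (1-ε)^(n - hammingDist x y) * ε^(hammingDist x y) else 0)
            (∑ x : Fin n → Bool,
              if ¬ Even (Finset.univ.filter fun i => x i = true).card then
                (1/2 : ℝ)^n * (1-ε)^(n - hammingDist x y) * ε^(hammingDist x y) else 0)
        = xorDistBound ε n) ∧
    (∀ n : ℕ, 1 ≤ n → ε ≤ xorDistBound ε n) ∧
    Filter.Tendsto (fun n => xorDistBound ε n) Filter.atTop (nhds (1/2)) := by
  have hε2 : 2*ε ≤ 1 := by linarith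
  refine ⟨?_, ?_, ?_⟩
  · intro n hn
    rw [Finset.sum_congr rfl fun y _ => min_sum_eq ε hε2 y, Finset.sum_const,
      Finset.card_univ, xorDistBound_eq ε hn]
    have hcard : Fintype.card (Fin n → Bool) = 2^n := by
      simp [Fintype.card_fun]
    rw [hcard, nsmul_eq_mul]
    have h2n : ((2:ℝ))^n ≠ 0 := by positivity
    push_cast
    rw [div_pow]
    field_simp
    rw [← mul_pow]; ring
  · intro n hn
    rw [xorDistBound_eq ε hn]
    have h1 : (1-2*ε)^n ≤ 1-2*ε :=
      pow_le_of_le_one (by linarith) (by linarith) (by omega)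
    linarith
  · have hlim : Filter.Tendsto (fun n : ℕ => (1 - (1-2*ε)^n)/2) Filter.atTop (nhds (1/2)) := by
      have h0 : Filter.Tendsto (fun n : ℕ => (1-2*ε)^n) Filter.atTop (nhds 0) :=
        tendsto_pow_atTop_nhds_zero_of_lt_one (by linarith) (by linarith)
      have := (tendsto_const_nhds (x := (1:ℝ)).sub h0).div_const 2
      simpa using this
    refine hlim.congr' ?_
    filter_upwards [Filter.eventually_ge_atTop 1] with n hn
    exact (xorDistBound_eq ε hn).symm
end

section
/- For any tripartite non-signalling system whose Alice–Bob marginal is P^{n,ε} (n independent unbiased PR-boxes with error ε), the specific non-signalling partition w̄ achieves, for any function f : {0,1}^n → {0,1}, a distance from uniform of the key bit f(X) of at least (−1 + √(1 + 64ε²))/(32ε), a constant independent of n. -/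
open scoped Classical

/-- Bipartite non-signalling condition. -/
def IsNSb {A B U V : Type*} [Fintype A] [Fintype B]
    (P : A → B → U → V → ℝ) : Prop :=
  (∀ y u u' v, ∑ x, P x y u v = ∑ x, P x y u' v) ∧
  (∀ x u v v', ∑ y, P x y u v = ∑ y, P x y u v')

/-- Conditional probability distribution. -/
def IsDistb {A B U V : Type*} [Fintype A] [Fintype B]
    (P : A → B → U → V → ℝ) : Prop :=
  (∀ x y u v, 0 ≤ P x y u v) ∧ ∀ u v, ∑ x, ∑ y, P x y u v = 1

namespace S17

variable {n : ℕ}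

def bx (x y : Fin n → Bool) : Fin n → Bool := fun i => xor (x i) (y i)

lemma bx_invol (t : Fin n → Bool) : Function.Involutive (fun x : Fin n → Bool => bx x t) := by
  intro x; funext i; simp only [bx]; cases x i <;> cases t i <;> rfl

lemma sum_bx (t : Fin n → Bool) (φ : (Fin n → Bool) → ℝ) :
    ∑ x, φ (bx x t) = ∑ x, φ x :=
  Fintype.sum_equiv ((bx_invol t).toPerm) _ _ (fun _ => rfl)

lemma bx_comm (x y : Fin n → Bool) : bx x y = bx y x := by
  funext i; simp only [bx]; cases x i <;> cases y i <;> rfl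

lemma bx_left_cancel (s x : Fin n → Bool) : bx s (bx x s) = x := by
  funext i; simp only [bx]; cases s i <;> cases x i <;> rfl

lemma bx_right_cancel (x e : Fin n → Bool) : bx (bx x e) e = x := bx_invol e x

lemma sum_pi_bool (g : Fin n → Bool → ℝ) :
    ∑ x : Fin n → Bool, ∏ i, g i (x i) = ∏ i, (g i false + g i true) := by
  classical
  have h := Finset.prod_univ_sum (fun _ : Fin n => (Finset.univ : Finset Bool)) g
  rw [Fintype.piFinset_univ] at h
  rw [← h]
  exact Finset.prod_congr rfl fun i _ => by simp [Fintype.sum_bool, add_comm]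

/-- weight of an error pattern -/
def w (ε : ℝ) (e : Fin n → Bool) : ℝ := ∏ i, (if e i then ε else 1 - ε)

lemma w_nonneg {ε : ℝ} (h0 : 0 ≤ ε) (h1 : ε ≤ 1) (e : Fin n → Bool) : 0 ≤ w ε e :=
  Finset.prod_nonneg fun i _ => by split <;> linarith

lemma sum_w (ε : ℝ) : ∑ e : Fin n → Bool, w ε e = 1 := by
  unfold w
  rw [sum_pi_bool (fun i b => if b then ε else 1 - ε)]
  simp

/-- character -/
def ch (T x : Fin n → Bool) : ℝ := ∏ i, (if T i && x i then -1 else 1)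

lemma ch_mul (T x y : Fin n → Bool) : ch T (bx x y) = ch T x * ch T y := by
  unfold ch bx
  rw [← Finset.prod_mul_distrib]
  exact Finset.prod_congr rfl fun i _ => by cases T i <;> cases x i <;> cases y i <;> norm_num

lemma ch_abs (T x : Fin n → Bool) : ch T x = 1 ∨ ch T x = -1 := by
  unfold ch
  induction (Finset.univ : Finset (Fin n)) using Finset.induction with
  | empty => left; simp
  | insert _ _ hmem ih =>
    rw [Finset.prod_insert hmem]
    rcases ih with h | h <;> rw [h] <;> split <;> norm_num

lemma sum_ch_mul (x y : Fin n → Bool) :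
    ∑ T : Fin n → Bool, ch T x * ch T y = if x = y then (2:ℝ)^n else 0 := by
  have h1 : ∀ T : Fin n → Bool, ch T x * ch T y
      = ∏ i, ((if T i && x i then (-1:ℝ) else 1) * (if T i && y i then -1 else 1)) :=
    fun T => (Finset.prod_mul_distrib).symm
  rw [Finset.sum_congr rfl fun T _ => h1 T]
  rw [sum_pi_bool (fun i b => (if b && x i then (-1:ℝ) else 1) * (if b && y i then -1 else 1))]
  have h2 : ∀ i, ((if false && x i then (-1:ℝ) else 1) * (if false && y i then -1 else 1)
      + (if true && x i then (-1:ℝ) else 1) * (if true && y i then -1 else 1))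
      = (if x i = y i then 2 else 0) := by
    intro i; cases x i <;> cases y i <;> norm_num
  rw [Finset.prod_congr rfl fun i _ => h2 i]
  by_cases hxy : x = y
  · subst hxy; simp
  · obtain ⟨i, hi⟩ := Function.ne_iff.mp hxy
    rw [if_neg hxy]
    exact Finset.prod_eq_zero (Finset.mem_univ i) (if_neg hi)

def rho (ε : ℝ) (T : Fin n → Bool) : ℝ := ∏ i, (if T i then 1 - 2*ε else 1)

lemma sum_w_ch (ε : ℝ) (T : Fin n → Bool) :
    ∑ e : Fin n → Bool, w ε e * ch T e = rho ε T := by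
  unfold w ch rho
  have h1 : ∀ e : Fin n → Bool, (∏ i, (if e i then ε else 1-ε)) * ∏ i, (if T i && e i then (-1:ℝ) else 1)
      = ∏ i, ((if e i then ε else 1-ε) * (if T i && e i then (-1:ℝ) else 1)) :=
    fun e => (Finset.prod_mul_distrib).symm
  rw [Finset.sum_congr rfl fun e _ => h1 e,
    sum_pi_bool (fun i b => (if b then ε else 1-ε) * (if T i && b then (-1:ℝ) else 1))]
  exact Finset.prod_congr rfl fun i _ => by cases T i <;> norm_num <;> ring

/-- Fourier coefficient -/
noncomputable def fc (φ : (Fin n → Bool) → ℝ) (T : Fin n → Bool) : ℝ :=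
  ((2:ℝ)^n)⁻¹ * ∑ x, φ x * ch T x

lemma plancherel (φ ψ : (Fin n → Bool) → ℝ) :
    ∑ T : Fin n → Bool, fc φ T * fc ψ T = ((2:ℝ)^n)⁻¹ * ∑ x, φ x * ψ x := by
  have h2n : ((2:ℝ)^n) ≠ 0 := by positivity
  unfold fc
  have step : ∀ T : Fin n → Bool,
      (((2:ℝ)^n)⁻¹ * ∑ x, φ x * ch T x) * (((2:ℝ)^n)⁻¹ * ∑ y, ψ y * ch T y)
      = (((2:ℝ)^n)⁻¹)^2 * ∑ x, ∑ y, (φ x * ψ y) * (ch T x * ch T y) := by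
    intro T
    have hAB : (∑ x, φ x * ch T x) * (∑ y, ψ y * ch T y)
        = ∑ x, ∑ y, (φ x * ψ y) * (ch T x * ch T y) := by
      rw [Finset.sum_mul_sum]
      exact Finset.sum_congr rfl fun x _ => Finset.sum_congr rfl fun y _ => by ring
    calc (((2:ℝ)^n)⁻¹ * ∑ x, φ x * ch T x) * (((2:ℝ)^n)⁻¹ * ∑ y, ψ y * ch T y)
        = (((2:ℝ)^n)⁻¹)^2 * ((∑ x, φ x * ch T x) * (∑ y, ψ y * ch T y)) := by ring
      _ = (((2:ℝ)^n)⁻¹)^2 * ∑ x, ∑ y, (φ x * ψ y) * (ch T x * ch T y) := by rw [hAB]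
  rw [Finset.sum_congr rfl fun T _ => step T, ← Finset.mul_sum]
  rw [Finset.sum_comm]
  have inner : ∀ x : Fin n → Bool,
      ∑ T : Fin n → Bool, ∑ y, (φ x * ψ y) * (ch T x * ch T y)
      = (2:ℝ)^n * (φ x * ψ x) := by
    intro x
    rw [Finset.sum_comm]
    have : ∀ y : Fin n → Bool, ∑ T : Fin n → Bool, (φ x * ψ y) * (ch T x * ch T y)
        = (φ x * ψ y) * (if x = y then (2:ℝ)^n else 0) := by
      intro y; rw [← Finset.mul_sum, sum_ch_mul]
    rw [Finset.sum_congr rfl fun y _ => this y]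
    simp only [mul_ite, mul_zero]
    rw [Finset.sum_ite_eq]
    simp [mul_comm]
  rw [Finset.sum_congr rfl fun x _ => inner x, ← Finset.mul_sum]
  field_simp

/-- sign of f -/
def sg (f : (Fin n → Bool) → Bool) (x : Fin n → Bool) : ℝ := if f x then -1 else 1

lemma sg_sq (f) (x : Fin n → Bool) : sg f x * sg f x = 1 := by
  unfold sg; split <;> norm_num

lemma sg_abs (f) (x : Fin n → Bool) : |sg f x| = 1 := by
  unfold sg; split <;> norm_num

/-- noisy average of sg f -/
noncomputable def FF (ε : ℝ) (f : (Fin n → Bool) → Bool) (s : Fin n → Bool) : ℝ :=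
  ∑ e, w ε e * sg f (bx s e)

/-- sign of FF -/
noncomputable def gg (ε : ℝ) (f : (Fin n → Bool) → Bool) (s : Fin n → Bool) : ℝ :=
  if FF ε f s < 0 then -1 else 1

lemma gg_mul_FF (ε f) (s : Fin n → Bool) : gg ε f s * FF ε f s = |FF ε f s| := by
  unfold gg
  rcases lt_trichotomy (FF ε f s) 0 with h | h | h
  · rw [if_pos h, abs_of_neg h]; ring
  · rw [h]; simp
  · rw [if_neg (not_lt.mpr h.le), abs_of_pos h]; ring

lemma FF_abs_le {ε : ℝ} (h0 : 0 ≤ ε) (h1 : ε ≤ 1) (f) (s : Fin n → Bool) : |FF ε f s| ≤ 1 := by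
  unfold FF
  calc |∑ e, w ε e * sg f (bx s e)| ≤ ∑ e, |w ε e * sg f (bx s e)| := Finset.abs_sum_le_sum_abs _ _
    _ = ∑ e, w ε e := Finset.sum_congr rfl fun e _ => by
        rw [abs_mul, sg_abs, mul_one, abs_of_nonneg (w_nonneg h0 h1 e)]
    _ = 1 := sum_w ε

/-- key reindex: `∑ x, w (x⊕s) sg x = F s` -/
lemma sum_w_sg (ε : ℝ) (f) (s : Fin n → Bool) :
    ∑ x, w ε (bx x s) * sg f x = FF ε f s := by
  unfold FF
  rw [← sum_bx s (fun e => w ε e * sg f (bx s e))]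
  exact Finset.sum_congr rfl fun x _ => by rw [bx_left_cancel]

lemma sum_w_bx (ε : ℝ) (s : Fin n → Bool) : ∑ x, w ε (bx x s) = 1 := by
  rw [sum_bx s (fun e => w ε e)]; exact sum_w ε

lemma sum_FF (ε : ℝ) (f : (Fin n → Bool) → Bool) :
    ∑ s, FF ε f s = ∑ x, sg f x := by
  unfold FF
  rw [Finset.sum_comm]
  have : ∀ e : Fin n → Bool, ∑ s, w ε e * sg f (bx s e) = w ε e * ∑ x, sg f x := by
    intro e
    rw [← Finset.mul_sum]
    congr 1
    exact sum_bx e (fun s => sg f s)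
  rw [Finset.sum_congr rfl fun e _ => this e, ← Finset.sum_mul, sum_w, one_mul]

lemma fc_FF (ε : ℝ) (f) (T : Fin n → Bool) :
    fc (FF ε f) T = rho ε T * fc (sg f) T := by
  unfold fc FF
  have h1 : ∀ s : Fin n → Bool, (∑ e, w ε e * sg f (bx s e)) * ch T s
      = ∑ e, w ε e * sg f (bx s e) * ch T s := by intro s; rw [Finset.sum_mul]
  rw [Finset.sum_congr rfl fun s _ => h1 s, Finset.sum_comm]
  have h2 : ∀ e : Fin n → Bool, ∑ s, w ε e * sg f (bx s e) * ch T s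
      = w ε e * ch T e * ∑ x, sg f x * ch T x := by
    intro e
    rw [← sum_bx e (fun s => w ε e * sg f (bx s e) * ch T s)]
    rw [Finset.mul_sum]
    refine Finset.sum_congr rfl fun x _ => ?_
    rw [bx_right_cancel, ch_mul]
    ring
  rw [Finset.sum_congr rfl fun e _ => h2 e, ← Finset.sum_mul, sum_w_ch]
  ring

lemma parseval_pm (a : (Fin n → Bool) → ℝ) (ha : ∀ x, a x * a x = 1) :
    ∑ T : Fin n → Bool, fc a T ^ 2 = 1 := by
  have h := plancherel a a
  simp only [pow_two]
  rw [h, Finset.sum_congr rfl fun x _ => ha x]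
  simp

def T0 : Fin n → Bool := fun _ => false

lemma ch_T0 (x : Fin n → Bool) : ch (T0 : Fin n → Bool) x = 1 := by
  unfold ch T0; simp

lemma rho_T0 (ε : ℝ) : rho ε (T0 : Fin n → Bool) = 1 := by unfold rho T0; simp

lemma fc_T0 (φ : (Fin n → Bool) → ℝ) : fc φ (T0 : Fin n → Bool) = ((2:ℝ)^n)⁻¹ * ∑ x, φ x := by
  unfold fc
  congr 1
  exact Finset.sum_congr rfl fun x _ => by rw [ch_T0, mul_one]

lemma rho_nonneg {ε : ℝ} (h : ε ≤ 1/2) (T : Fin n → Bool) : 0 ≤ rho ε T :=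
  Finset.prod_nonneg fun i _ => by split <;> linarith

lemma rho_le_one {ε : ℝ} (h0 : 0 ≤ ε) (h : ε ≤ 1/2) (T : Fin n → Bool) : rho ε T ≤ 1 :=
  Finset.prod_le_one (fun i _ => by split <;> linarith) (fun i _ => by split <;> linarith)

lemma rho_le {ε : ℝ} (h0 : 0 ≤ ε) (h : ε ≤ 1/2) {T : Fin n → Bool} (hT : T ≠ T0) :
    rho ε T ≤ 1 - 2*ε := by
  obtain ⟨i, hi⟩ := Function.ne_iff.mp hT
  have hi' : T i = true := by
    cases hTi : T i
    · exact absurd (by rw [hTi]; rfl) hi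
    · rfl
  unfold rho
  rw [← Finset.mul_prod_erase Finset.univ _ (Finset.mem_univ i), hi', if_pos rfl]
  have hle : ∏ j ∈ Finset.univ.erase i, (if T j then 1 - 2*ε else 1) ≤ 1 :=
    Finset.prod_le_one (fun j _ => by split <;> linarith) (fun j _ => by split <;> linarith)
  have hnn : 0 ≤ ∏ j ∈ Finset.univ.erase i, (if T j then 1 - 2*ε else 1) :=
    Finset.prod_nonneg fun j _ => by split <;> linarith
  nlinarith

lemma gg_sq (ε : ℝ) (f) (s : Fin n → Bool) : gg ε f s * gg ε f s = 1 := by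
  unfold gg; split <;> norm_num

lemma abs_gg_sub_FF {ε : ℝ} (h0 : 0 ≤ ε) (h1 : ε ≤ 1) (f) (s : Fin n → Bool) :
    |gg ε f s - FF ε f s| = 1 - |FF ε f s| := by
  have hb := FF_abs_le h0 h1 f s
  have hb1 := abs_le.mp hb
  unfold gg
  split
  · rename_i h
    rw [abs_of_neg h, abs_of_nonpos (by linarith)]
    ring
  · rename_i h
    push_neg at h
    rw [abs_of_nonneg h, abs_of_nonneg (by linarith)]

lemma card_pi_bool : ((Fintype.card (Fin n → Bool) : ℝ)) = (2:ℝ)^n := by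
  rw [Fintype.card_fun]
  simp

lemma scalar_term (ε ρ g a : ℝ) (hρ0 : 0 ≤ ρ) (hρle : ρ ≤ 1 - 2*ε) (hε2 : 2*ε ≤ 1) :
    ρ * (g * a) ≤ (1 - 2*ε) * ((a^2 + g^2)/2) := by
  nlinarith [sq_nonneg (g - a), sq_nonneg (g + a), mul_nonneg hρ0 (sq_nonneg (g - a)),
    mul_nonneg hρ0 (sq_nonneg (g + a)), mul_nonneg (by linarith : (0:ℝ) ≤ 1 - 2*ε - ρ)
      (by nlinarith [sq_nonneg a, sq_nonneg g] : (0:ℝ) ≤ a^2 + g^2)]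

lemma final_scalar (ε Δ B G Tv C : ℝ) (hε0 : 0 < ε) (hΔquad : Δ = 2*ε*(1 - 4*Δ^2))
    (hTv1 : Tv = 1 - C) (hCle : C ≤ G*B + (1 - 2*ε) * (((1 - B^2) + (1 - G^2))/2))
    (hGB : |G| ≤ |B| + Tv) (hB : |B| < Δ) (hT : Tv < Δ) : False := by
  have hBnn : 0 ≤ |B| := abs_nonneg B
  have hGnn : 0 ≤ |G| := abs_nonneg G
  have hB2 : B^2 = |B|^2 := (sq_abs B).symm
  have hG2 : G^2 = |G|^2 := (sq_abs G).symm
  have hGBle : G*B ≤ |G| * |B| := by rw [← abs_mul]; exact le_abs_self _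
  have hΔpos : 0 < Δ := lt_of_le_of_lt hBnn hB
  have hG2le : G^2 ≤ (|B| + Tv)^2 := by rw [hG2]; exact pow_le_pow_left₀ hGnn hGB 2
  have hbTv : 0 ≤ |B| + Tv := le_trans hGnn hGB
  have h2lt : (|B| + Tv)^2 < 4*Δ^2 := by nlinarith
  have hG4 : G^2 < 4*Δ^2 := lt_of_le_of_lt hG2le h2lt
  have hB4 : B^2 < Δ^2 := by rw [hB2]; nlinarith
  have hTvge : Tv ≥ 2*ε*(1 - (B^2 + G^2)/2) := by
    nlinarith [sq_nonneg (|G| - |B|)]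
  have hmlt : (B^2 + G^2)/2 < 4*Δ^2 := by nlinarith [mul_pos hΔpos hΔpos]
  have hfin : 2*ε*(1 - (B^2 + G^2)/2) > 2*ε*(1 - 4*Δ^2) := by
    linarith [mul_pos hε0 (sub_pos.mpr hmlt)]
  linarith

theorem main_bound (ε : ℝ) (hε0 : 0 < ε) (hε : ε ≤ 1/4) (f : (Fin n → Bool) → Bool) :
    (-1 + Real.sqrt (1 + 64*ε^2))/(16*ε) ≤ |((2:ℝ)^n)⁻¹ * ∑ x, sg f x| ∨
    (-1 + Real.sqrt (1 + 64*ε^2))/(16*ε) ≤ ((2:ℝ)^n)⁻¹ * ∑ s, (1 - |FF ε f s|) := by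
  have h2n : ((2:ℝ)^n) ≠ 0 := by positivity
  set c : ℝ := ((2:ℝ)^n)⁻¹ with hc
  set r : ℝ := Real.sqrt (1 + 64*ε^2) with hrdef
  set Δ : ℝ := (-1 + r)/(16*ε) with hΔdef
  -- the quadratic identity for Δ
  have hr2 : r^2 = 1 + 64*ε^2 := Real.sq_sqrt (by positivity)
  have hΔeq : 16*ε*Δ = -1 + r := by
    rw [hΔdef]; field_simp
  have key : (16*ε*Δ+1)^2 = 1 + 64*ε^2 := by
    rw [hΔeq]; ring_nf; ring_nf at hr2; linarith
  have hΔquad : Δ = 2*ε*(1 - 4*Δ^2) := by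
    have goal' : 32*ε*(Δ - 2*ε*(1-4*Δ^2)) = 0 := by linear_combination key
    have h32 : (32:ℝ)*ε ≠ 0 := by positivity
    rcases mul_eq_zero.mp goal' with h | h
    · exact absurd h h32
    · linarith
  by_contra hcon
  push_neg at hcon
  obtain ⟨hB, hT⟩ := hcon
  set B : ℝ := c * ∑ x, sg f x with hBdef
  set G : ℝ := c * ∑ s, gg ε f s with hGdef
  set Tv : ℝ := c * ∑ s, (1 - |FF ε f s|) with hTvdef
  set C : ℝ := c * ∑ s, |FF ε f s| with hCdef
  have hcpos : 0 < c := by rw [hc]; positivity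
  have hε1 : ε ≤ 1 := by linarith
  -- Tv = 1 - C
  have hone : c * ∑ _s : Fin n → Bool, (1:ℝ) = 1 := by
    rw [Finset.sum_const, Finset.card_univ, nsmul_eq_mul, mul_one, card_pi_bool, hc]
    exact inv_mul_cancel₀ h2n
  have hTv1 : Tv = 1 - C := by
    rw [hTvdef, hCdef, Finset.sum_sub_distrib, mul_sub, hone]
  -- Fourier expansion of C
  have hCf : C = ∑ T : Fin n → Bool, rho ε T * (fc (gg ε f) T * fc (sg f) T) := by
    rw [hCdef]
    have h1 : ∀ s : Fin n → Bool, |FF ε f s| = gg ε f s * FF ε f s :=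
      fun s => (gg_mul_FF ε f s).symm
    rw [Finset.sum_congr rfl fun s _ => h1 s, ← plancherel]
    exact Finset.sum_congr rfl fun T _ => by rw [fc_FF]; ring
  -- split off T0
  have hsplit : ∀ φ : (Fin n → Bool) → ℝ,
      ∑ T : Fin n → Bool, φ T = φ T0 + ∑ T ∈ Finset.univ.erase T0, φ T :=
    fun φ => (Finset.add_sum_erase Finset.univ φ (Finset.mem_univ T0)).symm
  have hfcB : fc (sg f) (T0 : Fin n → Bool) = B := by rw [fc_T0, hBdef, hc]
  have hfcG : fc (gg ε f) (T0 : Fin n → Bool) = G := by rw [fc_T0, hGdef, hc]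
  have hparsA : ∑ T ∈ Finset.univ.erase T0, fc (sg f) T ^ 2 = 1 - B^2 := by
    have := parseval_pm (sg f) (sg_sq f)
    rw [hsplit (fun T => fc (sg f) T ^ 2), hfcB] at this
    linarith
  have hparsG : ∑ T ∈ Finset.univ.erase T0, fc (gg ε f) T ^ 2 = 1 - G^2 := by
    have := parseval_pm (gg ε f) (gg_sq ε f)
    rw [hsplit (fun T => fc (gg ε f) T ^ 2), hfcG] at this
    linarith
  -- termwise bound on the tail
  have htail : ∑ T ∈ Finset.univ.erase T0, rho ε T * (fc (gg ε f) T * fc (sg f) T)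
      ≤ (1 - 2*ε) * (((1 - B^2) + (1 - G^2))/2) := by
    have hterm : ∀ T ∈ Finset.univ.erase T0,
        rho ε T * (fc (gg ε f) T * fc (sg f) T)
        ≤ (1 - 2*ε) * ((fc (sg f) T ^ 2 + fc (gg ε f) T ^ 2)/2) := by
      intro T hT
      have hTne : T ≠ T0 := Finset.ne_of_mem_erase hT
      exact scalar_term ε (rho ε T) (fc (gg ε f) T) (fc (sg f) T)
        (rho_nonneg (by linarith) T) (rho_le hε0.le (by linarith) hTne) (by linarith)
    calc ∑ T ∈ Finset.univ.erase T0, rho ε T * (fc (gg ε f) T * fc (sg f) T)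
        ≤ ∑ T ∈ Finset.univ.erase T0, (1 - 2*ε) * ((fc (sg f) T ^ 2 + fc (gg ε f) T ^ 2)/2) :=
          Finset.sum_le_sum hterm
      _ = (1 - 2*ε) * (((1 - B^2) + (1 - G^2))/2) := by
          rw [← Finset.mul_sum, ← Finset.sum_div, Finset.sum_add_distrib, hparsA, hparsG]
  -- assemble bound on C
  have hCle : C ≤ G*B + (1 - 2*ε) * (((1 - B^2) + (1 - G^2))/2) := by
    have hCsplit : C = rho ε (T0 : Fin n → Bool) * (fc (gg ε f) T0 * fc (sg f) T0)
        + ∑ T ∈ Finset.univ.erase T0, rho ε T * (fc (gg ε f) T * fc (sg f) T) := by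
      rw [hCf]
      exact hsplit (fun T => rho ε T * (fc (gg ε f) T * fc (sg f) T))
    rw [hCsplit, rho_T0, hfcG, hfcB, one_mul]
    linarith [htail]
  -- |G| ≤ |B| + Tv
  have hGB : |G| ≤ |B| + Tv := by
    have hdecomp : G = c * ∑ s, (gg ε f s - FF ε f s) + B := by
      rw [hGdef, hBdef, Finset.sum_sub_distrib, mul_sub, ← sum_FF ε f]
      ring
    have habs1 : |c * ∑ s, (gg ε f s - FF ε f s)| ≤ Tv := by
      rw [abs_mul, abs_of_pos hcpos, hTvdef]
      refine mul_le_mul_of_nonneg_left ?_ hcpos.le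
      calc |∑ s, (gg ε f s - FF ε f s)| ≤ ∑ s, |gg ε f s - FF ε f s| :=
            Finset.abs_sum_le_sum_abs _ _
        _ = ∑ s, (1 - |FF ε f s|) :=
            Finset.sum_congr rfl fun s _ => abs_gg_sub_FF hε0.le hε1 f s
    calc |G| = |c * ∑ s, (gg ε f s - FF ε f s) + B| := by rw [← hdecomp]
      _ ≤ |c * ∑ s, (gg ε f s - FF ε f s)| + |B| := abs_add_le _ _
      _ ≤ |B| + Tv := by linarith
  exact final_scalar ε Δ B G Tv C hε0 hΔquad hTv1 hCle hGB hB hT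

lemma factor_eq (ε : ℝ) (a b c d : Bool) :
    (if xor a b = (c && d) then (1 - ε)/2 else ε/2)
      = (2:ℝ)⁻¹ * (if xor a (xor b (c && d)) then ε else 1 - ε) := by
  cases a <;> cases b <;> cases c <;> cases d <;> norm_num <;> ring

/-- the PR-box product distribution -/
noncomputable def Pb (ε : ℝ) (x y u v : Fin n → Bool) : ℝ :=
  ∏ i, (if xor (x i) (y i) = (u i && v i) then (1 - ε)/2 else ε/2)

def sOf (y u v : Fin n → Bool) : Fin n → Bool := fun i => xor (y i) (u i && v i)

lemma Pb_nonneg {ε : ℝ} (h0 : 0 ≤ ε) (h1 : ε ≤ 1) (x y u v : Fin n → Bool) :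
    0 ≤ Pb ε x y u v :=
  Finset.prod_nonneg fun i _ => by split <;> linarith

lemma Pb_eq (ε : ℝ) (x y u v : Fin n → Bool) :
    Pb ε x y u v = ((2:ℝ)^n)⁻¹ * w ε (bx x (sOf y u v)) := by
  unfold Pb w
  have hch : ((2:ℝ)^n)⁻¹ = ∏ _i : Fin n, (2:ℝ)⁻¹ := by
    rw [Finset.prod_const, Finset.card_univ, Fintype.card_fin, ← inv_pow]
  rw [hch, ← Finset.prod_mul_distrib]
  refine Finset.prod_congr rfl fun i _ => ?_
  show (if xor (x i) (y i) = (u i && v i) then (1 - ε)/2 else ε/2)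
      = (2:ℝ)⁻¹ * (if bx x (sOf y u v) i then ε else 1 - ε)
  simp only [bx, sOf]
  exact factor_eq ε (x i) (y i) (u i) (v i)

noncomputable def hfun (ε : ℝ) (f : (Fin n → Bool) → Bool) (x s : Fin n → Bool) : ℝ :=
  (sg f x - FF ε f s) / (1 + |FF ε f s|)

lemma one_add_absFF_pos (ε : ℝ) (f) (s : Fin n → Bool) : (0:ℝ) < 1 + |FF ε f s| := by
  have := abs_nonneg (FF ε f s); linarith

lemma hfun_abs_le (ε : ℝ) (f) (x s : Fin n → Bool) : |hfun ε f x s| ≤ 1 := by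
  unfold hfun
  rw [abs_div, abs_of_pos (one_add_absFF_pos ε f s), div_le_one (one_add_absFF_pos ε f s)]
  calc |sg f x - FF ε f s| ≤ |sg f x| + |FF ε f s| := abs_sub _ _
    _ = 1 + |FF ε f s| := by rw [sg_abs]

lemma sum_w_hfun (ε : ℝ) (f) (s : Fin n → Bool) :
    ∑ x, w ε (bx x s) * hfun ε f x s = 0 := by
  unfold hfun
  have h1 : ∀ x : Fin n → Bool, w ε (bx x s) * ((sg f x - FF ε f s) / (1 + |FF ε f s|))
      = (w ε (bx x s) * sg f x - w ε (bx x s) * FF ε f s) / (1 + |FF ε f s|) := by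
    intro x; ring
  rw [Finset.sum_congr rfl fun x _ => h1 x, ← Finset.sum_div, Finset.sum_sub_distrib,
    sum_w_sg, ← Finset.sum_mul, sum_w_bx, one_mul, sub_self, zero_div]

lemma sum_w_sg_hfun (ε : ℝ) (f) (s : Fin n → Bool) :
    ∑ x, w ε (bx x s) * (sg f x * hfun ε f x s) = 1 - |FF ε f s| := by
  unfold hfun
  have h1 : ∀ x : Fin n → Bool, w ε (bx x s) * (sg f x * ((sg f x - FF ε f s) / (1 + |FF ε f s|)))
      = (w ε (bx x s) * (sg f x * sg f x) - (w ε (bx x s) * sg f x) * FF ε f s) / (1 + |FF ε f s|) := by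
    intro x; ring
  rw [Finset.sum_congr rfl fun x _ => h1 x, ← Finset.sum_div, Finset.sum_sub_distrib]
  have h2 : ∀ x : Fin n → Bool, w ε (bx x s) * (sg f x * sg f x) = w ε (bx x s) := by
    intro x; rw [sg_sq, mul_one]
  rw [Finset.sum_congr rfl fun x _ => h2 x, sum_w_bx, ← Finset.sum_mul, sum_w_sg]
  rw [div_eq_iff (ne_of_gt (one_add_absFF_pos ε f s))]
  have : FF ε f s * FF ε f s = |FF ε f s| * |FF ε f s| := by
    rw [← abs_mul, abs_of_nonneg (mul_self_nonneg _)]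
  nlinarith [this]

/-- the attack box -/
noncomputable def Q (ε : ℝ) (f : (Fin n → Bool) → Bool) (σ : ℝ) (x y u v : Fin n → Bool) : ℝ :=
  Pb ε x y u v * (1 + σ * hfun ε f x (sOf y u v))

lemma Q_nonneg {ε σ : ℝ} (h0 : 0 ≤ ε) (h1 : ε ≤ 1) (hσ : |σ| ≤ 1) (f)
    (x y u v : Fin n → Bool) : 0 ≤ Q ε f σ x y u v := by
  unfold Q
  refine mul_nonneg (Pb_nonneg h0 h1 x y u v) ?_
  have : |σ * hfun ε f x (sOf y u v)| ≤ 1 := by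
    rw [abs_mul]
    calc |σ| * |hfun ε f x (sOf y u v)| ≤ 1 * 1 :=
      mul_le_mul hσ (hfun_abs_le ε f x (sOf y u v)) (abs_nonneg _) zero_le_one
    _ = 1 := mul_one 1
  have := abs_le.mp this
  linarith [this.1]

lemma Q_sum_x (ε σ : ℝ) (f) (y u v : Fin n → Bool) :
    ∑ x, Q ε f σ x y u v = ((2:ℝ)^n)⁻¹ := by
  unfold Q
  have h1 : ∀ x : Fin n → Bool, Pb ε x y u v * (1 + σ * hfun ε f x (sOf y u v))
      = ((2:ℝ)^n)⁻¹ * (w ε (bx x (sOf y u v)) + σ * (w ε (bx x (sOf y u v)) * hfun ε f x (sOf y u v))) := by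
    intro x; rw [Pb_eq]; ring
  rw [Finset.sum_congr rfl fun x _ => h1 x, ← Finset.mul_sum, Finset.sum_add_distrib,
    ← Finset.mul_sum, sum_w_hfun, sum_w_bx]
  ring

lemma Q_sum_y (ε σ : ℝ) (f) (x u v : Fin n → Bool) :
    ∑ y, Q ε f σ x y u v
      = ((2:ℝ)^n)⁻¹ * ∑ s, w ε (bx x s) * (1 + σ * hfun ε f x s) := by
  unfold Q
  have h1 : ∀ y : Fin n → Bool, Pb ε x y u v * (1 + σ * hfun ε f x (sOf y u v))
      = ((2:ℝ)^n)⁻¹ * (w ε (bx x (sOf y u v)) * (1 + σ * hfun ε f x (sOf y u v))) := by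
    intro y; rw [Pb_eq]; ring
  rw [Finset.sum_congr rfl fun y _ => h1 y, ← Finset.mul_sum]
  congr 1
  exact sum_bx (fun i => u i && v i) (fun s => w ε (bx x s) * (1 + σ * hfun ε f x s))

lemma Q_sum_xy (ε σ : ℝ) (f) (u v : Fin n → Bool) :
    ∑ x, ∑ y, Q ε f σ x y u v = 1 := by
  rw [Finset.sum_comm]
  have h1 : ∀ y : Fin n → Bool, ∑ x, Q ε f σ x y u v = ((2:ℝ)^n)⁻¹ :=
    fun y => Q_sum_x ε σ f y u v
  rw [Finset.sum_congr rfl fun y _ => h1 y, Finset.sum_const, Finset.card_univ, nsmul_eq_mul,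
    card_pi_bool]
  field_simp

lemma Q_bias (ε σ : ℝ) (f) (u v : Fin n → Bool) :
    ∑ x, ∑ y, sg f x * Q ε f σ x y u v
      = ((2:ℝ)^n)⁻¹ * ∑ x, sg f x + σ * (((2:ℝ)^n)⁻¹ * ∑ s, (1 - |FF ε f s|)) := by
  rw [Finset.sum_comm]
  have h1 : ∀ y : Fin n → Bool, ∑ x, sg f x * Q ε f σ x y u v
      = ((2:ℝ)^n)⁻¹ * (FF ε f (sOf y u v) + σ * (1 - |FF ε f (sOf y u v)|)) := by
    intro y
    have h2 : ∀ x : Fin n → Bool, sg f x * Q ε f σ x y u v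
        = ((2:ℝ)^n)⁻¹ * (w ε (bx x (sOf y u v)) * sg f x
            + σ * (w ε (bx x (sOf y u v)) * (sg f x * hfun ε f x (sOf y u v)))) := by
      intro x; unfold Q; rw [Pb_eq]; ring
    rw [Finset.sum_congr rfl fun x _ => h2 x, ← Finset.mul_sum, Finset.sum_add_distrib,
      ← Finset.mul_sum, sum_w_sg, sum_w_sg_hfun]
  rw [Finset.sum_congr rfl fun y _ => h1 y, ← Finset.mul_sum]
  have h3 : ∑ y : Fin n → Bool, (FF ε f (sOf y u v) + σ * (1 - |FF ε f (sOf y u v)|))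
      = ∑ s, (FF ε f s + σ * (1 - |FF ε f s|)) :=
    sum_bx (fun i => u i && v i) (fun s => FF ε f s + σ * (1 - |FF ε f s|))
  rw [h3, Finset.sum_add_distrib, ← Finset.mul_sum, sum_FF]
  ring

end S17

/-- For the Alice–Bob marginal `P^{n,ε}` (n independent unbiased PR-boxes with error
`0 < ε ≤ 1/4`) there is a non-signalling partition into two halves of weight `1/2`
achieving, for every function `f : {0,1}^n → {0,1}` and all inputs, a distance from
uniform of the key bit `f(X)` of at least `(−1 + √(1 + 64ε²))/(32ε)`, a constant
independent of `n`. -/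
theorem stmt_17 (n : ℕ) (ε : ℝ) (hε0 : 0 < ε) (hε : ε ≤ 1/4)
    (f : (Fin n → Bool) → Bool) :
    ∃ Q0 Q1 : (Fin n → Bool) → (Fin n → Bool) → (Fin n → Bool) → (Fin n → Bool) → ℝ,
      IsDistb Q0 ∧ IsNSb Q0 ∧ IsDistb Q1 ∧ IsNSb Q1 ∧
      (∀ x y u v, (1/2) * Q0 x y u v + (1/2) * Q1 x y u v
        = ∏ i, (if xor (x i) (y i) = (u i && v i) then (1 - ε)/2 else ε/2)) ∧
      ∀ u v, (-1 + Real.sqrt (1 + 64 * ε^2)) / (32 * ε)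
        ≤ (1/2) * ((1/2) * |∑ x, ∑ y, (if f x then (-1:ℝ) else 1) * Q0 x y u v|
                 + (1/2) * |∑ x, ∑ y, (if f x then (-1:ℝ) else 1) * Q1 x y u v|) := by
  classical
  have hε1 : ε ≤ 1 := by linarith
  refine ⟨S17.Q ε f 1, S17.Q ε f (-1), ?_, ?_, ?_, ?_, ?_, ?_⟩
  · exact ⟨fun x y u v => S17.Q_nonneg hε0.le hε1 (by norm_num) f x y u v,
      fun u v => S17.Q_sum_xy ε 1 f u v⟩
  · exact ⟨fun y u u' v => by rw [S17.Q_sum_x, S17.Q_sum_x],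
      fun x u v v' => by rw [S17.Q_sum_y, S17.Q_sum_y]⟩
  · exact ⟨fun x y u v => S17.Q_nonneg hε0.le hε1 (by norm_num) f x y u v,
      fun u v => S17.Q_sum_xy ε (-1) f u v⟩
  · exact ⟨fun y u u' v => by rw [S17.Q_sum_x, S17.Q_sum_x],
      fun x u v v' => by rw [S17.Q_sum_y, S17.Q_sum_y]⟩
  · intro x y u v
    show (1/2) * S17.Q ε f 1 x y u v + (1/2) * S17.Q ε f (-1) x y u v = S17.Pb ε x y u v
    simp only [S17.Q]
    ring
  · intro u v
    have hb1 := S17.Q_bias (n := n) ε 1 f u v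
    have hb2 := S17.Q_bias (n := n) ε (-1) f u v
    have main := S17.main_bound ε hε0 hε f
    simp only [S17.sg] at hb1 hb2 main
    rw [hb1, hb2]
    set D := (-1 + Real.sqrt (1 + 64 * ε^2)) / (16*ε) with hDdef
    set Bv := ((2:ℝ)^n)⁻¹ * ∑ x, (if f x = true then (-1:ℝ) else 1) with hBvdef
    set Tv := ((2:ℝ)^n)⁻¹ * ∑ s, (1 - |S17.FF ε f s|) with hTvdef
    have hD2 : (-1 + Real.sqrt (1 + 64 * ε^2)) / (32*ε) = D/2 := by
      rw [hDdef, div_div]; congr 1; ring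
    rw [hD2]
    have t1 : |2*Bv| = 2*|Bv| := by rw [abs_mul, abs_two]
    have habs1 : 2*|Bv| ≤ |Bv + 1*Tv| + |Bv + (-1)*Tv| := by
      have hsum : (Bv + 1*Tv) + (Bv + (-1)*Tv) = 2*Bv := by ring
      calc 2*|Bv| = |2*Bv| := t1.symm
        _ = |(Bv + 1*Tv) + (Bv + (-1)*Tv)| := by rw [hsum]
        _ ≤ |Bv + 1*Tv| + |Bv + (-1)*Tv| := abs_add_le _ _
    have habs2 : 2*Tv ≤ |Bv + 1*Tv| + |Bv + (-1)*Tv| := by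
      have hsub : (Bv + 1*Tv) - (Bv + (-1)*Tv) = 2*Tv := by ring
      calc 2*Tv ≤ |2*Tv| := le_abs_self _
        _ = |(Bv + 1*Tv) - (Bv + (-1)*Tv)| := by rw [hsub]
        _ ≤ |Bv + 1*Tv| + |Bv + (-1)*Tv| := abs_sub _ _
    rcases main with h | h
    · linarith
    · linarith
end
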